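/- arXiv:1907.08086 — 4 statements merged into one kernel-verified Lean document; each statement's English description precedes it below -/
import Mathlib

section
/- Let r ≥ 3 be an integer divisible by 3 and let G be a 3-uniform hypergraph with G → (P⁽³⁾ₙ)₂. Let G′ be the r-uniform hypergraph obtained from G by replacing every vertex v of G by a set S(v) of r/3 new vertices (the sets S(v) pairwise disjoint), where for each edge {u,v,w} of G the set S(u) ∪ S(v) ∪ S(w) is an edge of G′ and these are all the edges of G′. Then |E(G′)| = |E(G)| and G′ → (P⁽ʳ⁾_{rn/3, 2r/3})₂. -/
/-- Under the 2-colouring `c`, the `r`-uniform hypergraph on vertex type `V` with edge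
set `E` contains a monochromatic copy of the `r`-uniform `(r - s)`-path on `n` vertices
(consecutive edges start at distance `s`, hence share `r - s` vertices). -/
def HasMonoPathCopy {V : Type} [DecidableEq V] (r s : ℕ) (E : Finset (Finset V))
    (c : Finset V → Bool) (n : ℕ) : Prop :=
  ∃ (f : ℕ → V) (b : Bool), Set.InjOn f (Set.Iio n) ∧
    ∀ j, j * s + r ≤ n →
      ((Finset.range r).image (fun i => f (j * s + i)) ∈ E ∧
        c ((Finset.range r).image (fun i => f (j * s + i))) = b)

/-- `E` arrows the `r`-uniform `(r - s)`-path on `n` vertices with two colours.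
For `r = 3`, `s = 1` this is the 3-uniform tight path `P⁽³⁾ₙ`. -/
def ArrowsPath {V : Type} [DecidableEq V] (r s : ℕ) (E : Finset (Finset V)) (n : ℕ) :
    Prop :=
  ∀ c : Finset V → Bool, HasMonoPathCopy r s E c n

/-- Let `r ≥ 3` be divisible by `3` and let `G` be a 3-uniform hypergraph (edge set `E`
on vertex type `ℕ`) with `G → (P⁽³⁾ₙ)₂`.  Let `G'` be the `r`-uniform hypergraph obtained
by replacing every vertex `v` by the set `S(v) = {v} × Fin (r/3)` of `r/3` new vertices,
each edge `{u,v,w}` of `G` becoming the edge `S(u) ∪ S(v) ∪ S(w)` of `G'`.  Then `G'` has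
exactly as many edges as `G` and `G' → (P⁽ʳ⁾_{rn/3, 2r/3})₂`, the `r`-uniform
`(2r/3)`-path on `(r/3) * n` vertices. -/
theorem blowup_arrows (r : ℕ) (hr : 3 ≤ r) (hr3 : 3 ∣ r) (n : ℕ)
    (E : Finset (Finset ℕ)) (hE : ∀ e ∈ E, e.card = 3)
    (hG : ArrowsPath 3 1 E n) :
    (E.image (fun e => e ×ˢ (Finset.univ : Finset (Fin (r / 3))))).card = E.card ∧
    ArrowsPath r (r / 3)
      (E.image (fun e => e ×ˢ (Finset.univ : Finset (Fin (r / 3))))) (r / 3 * n) := by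
  obtain ⟨m, rfl⟩ := hr3
  have hm : 0 < m := by omega
  have hms : 3 * m / 3 = m := Nat.mul_div_cancel_left m (by norm_num)
  rw [hms]
  constructor
  · apply Finset.card_image_of_injOn
    intro e _ e' _ h
    ext x
    have hx := Finset.ext_iff.mp h (x, (⟨0, hm⟩ : Fin m))
    simpa [Finset.mem_product] using hx
  · intro c'
    obtain ⟨f, b, hinj, hpath⟩ := hG (fun e => c' (e ×ˢ (Finset.univ : Finset (Fin m))))
    refine ⟨fun k => (f (k / m), ⟨k % m, Nat.mod_lt _ hm⟩), b, ?_, ?_⟩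
    · intro k hk k' hk' h
      simp only [Set.mem_Iio] at hk hk'
      have h1 : f (k / m) = f (k' / m) := congrArg Prod.fst h
      have h2' : k % m = k' % m := congrArg (fun p => (p.2 : Fin m).val) h
      have hd : k / m = k' / m := by
        apply hinj
        · exact Set.mem_Iio.mpr ((Nat.div_lt_iff_lt_mul hm).mpr (by rw [Nat.mul_comm]; exact hk))
        · exact Set.mem_Iio.mpr ((Nat.div_lt_iff_lt_mul hm).mpr (by rw [Nat.mul_comm]; exact hk'))
        · exact h1
      have hk1 := Nat.div_add_mod k m
      have hk2 := Nat.div_add_mod k' m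
      rw [hd] at hk1
      omega
    · intro j hj
      have hj3 : j * 1 + 3 ≤ n := by
        have h1 : (j + 3) * m ≤ n * m := by
          calc (j + 3) * m = j * m + 3 * m := by ring
          _ ≤ m * n := hj
          _ = n * m := Nat.mul_comm m n
        have := Nat.le_of_mul_le_mul_right h1 hm
        omega
      obtain ⟨he, hc⟩ := hpath j hj3
      have hdiv : ∀ i, (j * m + i) / m = j + i / m := fun i => by
        rw [Nat.add_comm (j * m) i, Nat.mul_comm j m, Nat.add_mul_div_left _ _ hm,
          Nat.add_comm]
      have hmod : ∀ i, (j * m + i) % m = i % m := fun i => by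
        rw [Nat.add_comm (j * m) i, Nat.add_mul_mod_self_right]
      have key : (Finset.range (3 * m)).image
            (fun i => ((f ((j * m + i) / m), ⟨(j * m + i) % m, Nat.mod_lt _ hm⟩) : ℕ × Fin m))
          = ((Finset.range 3).image (fun i => f (j * 1 + i))) ×ˢ
              (Finset.univ : Finset (Fin m)) := by
        ext ⟨x, t⟩
        simp only [Finset.mem_image, Finset.mem_range, Finset.mem_product, Finset.mem_univ,
          and_true, Prod.mk.injEq]
        constructor
        · rintro ⟨i, hi, hfx, -⟩
          refine ⟨i / m, (Nat.div_lt_iff_lt_mul hm).mpr (by omega), ?_⟩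
          rw [hdiv i] at hfx
          rw [show j * 1 + i / m = j + i / m by ring, hfx]
        · rintro ⟨i₁, hi₁, hfx⟩
          refine ⟨i₁ * m + t.val, ?_, ?_, ?_⟩
          · have ht := t.isLt
            have : (i₁ + 1) * m ≤ 3 * m := Nat.mul_le_mul_right m (by omega)
            calc i₁ * m + t.val < i₁ * m + m := by omega
            _ = (i₁ + 1) * m := by ring
            _ ≤ 3 * m := this
          · rw [hdiv]
            have : (i₁ * m + t.val) / m = i₁ := by
              rw [Nat.add_comm, Nat.add_mul_div_right _ _ hm, Nat.div_eq_of_lt t.isLt]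
              omega
            rw [this, ← hfx]
            ring_nf
          · apply Fin.ext
            show (j * m + (i₁ * m + t.val)) % m = t.val
            rw [hmod, Nat.add_comm, Nat.add_mul_mod_self_right, Nat.mod_eq_of_lt t.isLt]
      constructor
      · rw [key]
        exact Finset.mem_image_of_mem _ he
      · rw [key]
        exact hc
end

section
/- For every pair of positive real constants ε and a, there is a constant b such that for every sufficiently large integer n there is a (simple) graph H with exactly ⌈a·n⌉ vertices and maximum degree at most b such that for every pair of disjoint sets S, T ⊆ V(H) with |S| ≥ ε·n and |T| ≥ ε·n there is at least one edge of H with one endpoint in S and the other in T. -/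
open Finset Nat




lemma card_perm_fixing {m : ℕ} (S : Finset (Fin m)) :
    (Finset.univ.filter fun σ : Equiv.Perm (Fin m) => ∀ x ∈ S, σ x = x).card
      = (m - S.card)! := by
  rw [← Fintype.card_subtype]
  have e1 : {σ : Equiv.Perm (Fin m) // ∀ x ∈ S, σ x = x}
      ≃ {σ : Equiv.Perm (Fin m) // ∀ a, ¬(a ∉ S) → σ a = a} :=
    Equiv.subtypeEquivRight (by intro σ; simp [not_not])
  have e2 := (Equiv.Perm.subtypeEquivSubtypePerm (fun a : Fin m => a ∉ S)).symm
  rw [Fintype.card_congr (e1.trans e2), Fintype.card_perm]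
  congr 1
  rw [Fintype.card_subtype_compl, Fintype.card_coe, Fintype.card_fin]

-- Lemma B
lemma card_perm_avoiding {m : ℕ} (S T : Finset (Fin m)) :
    (Finset.univ.filter fun σ : Equiv.Perm (Fin m) => ∀ x ∈ S, σ x ∉ T).card
      ≤ (m - S.card)! * (m - T.card).descFactorial S.card := by
  classical
  set B := (Finset.univ.filter fun σ : Equiv.Perm (Fin m) => ∀ x ∈ S, σ x ∉ T) with hB
  set f : Equiv.Perm (Fin m) → (S ↪ Fin m) :=
    fun σ => (Function.Embedding.subtype _).trans σ.toEmbedding with hf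
  have fapp : ∀ (σ : Equiv.Perm (Fin m)) (x : S), f σ x = σ x.1 := fun _ _ => rfl
  have fiber : ∀ e ∈ B.image f, (B.filter fun σ => f σ = e).card ≤ (m - S.card)! := by
    intro e he
    obtain ⟨σ0, hσ0B, hσ0⟩ := Finset.mem_image.1 he
    rw [← card_perm_fixing S]
    apply Finset.card_le_card_of_injOn (fun σ => σ0⁻¹ * σ)
    · intro σ hσ
      obtain ⟨hσB', hfe⟩ := Finset.mem_filter.1 hσ
      simp only [Finset.mem_coe, Finset.mem_filter, Finset.mem_univ, true_and]
      intro x hx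
      have hxx : σ x = σ0 x := by
        have h1 : f σ ⟨x, hx⟩ = f σ0 ⟨x, hx⟩ := by rw [hfe, hσ0]
        simpa [fapp] using h1
      simp [Equiv.Perm.mul_apply, hxx]
    · intro σ1 _ σ2 _ h
      exact mul_left_cancel h
  have himg : (B.image f).card ≤ (m - T.card).descFactorial S.card := by
    have hsub : B.image f ⊆ Finset.univ.filter (fun e : S ↪ Fin m => ∀ x, e x ∉ T) := by
      intro e he
      obtain ⟨σ, hσB, hσ⟩ := Finset.mem_image.1 he
      have hσB' := (Finset.mem_filter.1 hσB).2
      simp only [Finset.mem_filter, Finset.mem_univ, true_and]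
      intro x
      rw [← hσ, fapp]
      exact hσB' x.1 x.2
    refine (Finset.card_le_card hsub).trans ?_
    rw [← Fintype.card_subtype]
    have hle : Fintype.card {e : S ↪ Fin m // ∀ x, e x ∉ T}
        ≤ Fintype.card (S ↪ {y : Fin m // y ∉ T}) := by
      apply Fintype.card_le_of_injective
        (fun p => ⟨fun x => ⟨p.1 x, p.2 x⟩, fun x y h => p.1.injective (congrArg Subtype.val h)⟩)
      intro p q h
      apply Subtype.ext
      apply DFunLike.ext
      intro x
      exact congrArg Subtype.val (DFunLike.congr_fun h x)
    refine hle.trans ?_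
    rw [Fintype.card_embedding_eq, Fintype.card_coe]
    have hcc : Fintype.card {y : Fin m // y ∉ T} = m - T.card := by
      rw [Fintype.card_subtype_compl, Fintype.card_coe, Fintype.card_fin]
    rw [hcc]
  calc B.card ≤ (m - S.card)! * (B.image f).card := Finset.card_le_mul_card_image B _ fiber
    _ ≤ (m - S.card)! * ((m - T.card).descFactorial S.card) := Nat.mul_le_mul_left _ himg

-- Lemma C
lemma descFactorial_ratio' (k : ℕ) : ∀ a b : ℕ, a ≤ b →
    a.descFactorial k * b ^ k ≤ b.descFactorial k * a ^ k := by
  induction k with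
  | zero => simp
  | succ k ih =>
    intro a b hab
    rw [Nat.descFactorial_succ, Nat.descFactorial_succ, pow_succ, pow_succ]
    have h1 : (a - k) * b ≤ (b - k) * a := by
      rcases le_or_gt k a with h | h
      · have h2 : k * a ≤ k * b := Nat.mul_le_mul_left k hab
        have h3 : k ≤ b := h.trans hab
        have hba : a * b = b * a := Nat.mul_comm a b
        rw [Nat.sub_mul, Nat.sub_mul]
        omega
      · simp [Nat.sub_eq_zero_of_le h.le]
    calc (a - k) * a.descFactorial k * (b ^ k * b)
        = ((a - k) * b) * (a.descFactorial k * b ^ k) := by ring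
      _ ≤ ((b - k) * a) * (b.descFactorial k * a ^ k) :=
          Nat.mul_le_mul h1 (ih a b hab)
      _ = (b - k) * b.descFactorial k * (a ^ k * a) := by ring

-- Lemma D
lemma exists_good_tuple (m s0 d : ℕ)
    (hcount : (m.choose s0) ^ 2 * ((m - s0)! * (m - s0).descFactorial s0) ^ d
      < (m ! : ℕ) ^ d) :
    ∃ ω : Fin d → Equiv.Perm (Fin m),
      ∀ S T : Finset (Fin m), Disjoint S T → S.card = s0 → T.card = s0 →
        ∃ x ∈ S, ∃ k, ω k x ∈ T := by
  classical
  set Q := (m - s0)! * (m - s0).descFactorial s0 with hQ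
  set bad : Finset (Fin d → Equiv.Perm (Fin m)) :=
    Finset.univ.filter (fun ω => ∃ S T : Finset (Fin m),
      Disjoint S T ∧ S.card = s0 ∧ T.card = s0 ∧ ∀ k, ∀ x ∈ S, ω k x ∉ T) with hbad
  set P : Finset (Finset (Fin m) × Finset (Fin m)) :=
    (Finset.univ.powersetCard s0) ×ˢ (Finset.univ.powersetCard s0) with hP
  have hsub : bad ⊆ P.biUnion (fun p =>
      Finset.univ.filter (fun ω : Fin d → Equiv.Perm (Fin m) =>
        ∀ k, ∀ x ∈ p.1, ω k x ∉ p.2)) := by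
    intro ω hω
    obtain ⟨S, T, _, hS, hT, hmiss⟩ := (Finset.mem_filter.1 hω).2
    apply Finset.mem_biUnion.2
    refine ⟨(S, T), ?_, ?_⟩
    · simp [hP, Finset.mem_powersetCard, hS, hT]
    · simpa using hmiss
  have hterm : ∀ p ∈ P,
      (Finset.univ.filter (fun ω : Fin d → Equiv.Perm (Fin m) =>
        ∀ k, ∀ x ∈ p.1, ω k x ∉ p.2)).card ≤ Q ^ d := by
    intro p hp
    obtain ⟨hp1, hp2⟩ := Finset.mem_product.1 hp
    rw [Finset.mem_powersetCard] at hp1 hp2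
    have hsub2 : (Finset.univ.filter (fun ω : Fin d → Equiv.Perm (Fin m) =>
        ∀ k, ∀ x ∈ p.1, ω k x ∉ p.2))
        ⊆ Fintype.piFinset (fun _ : Fin d =>
          Finset.univ.filter (fun σ : Equiv.Perm (Fin m) => ∀ x ∈ p.1, σ x ∉ p.2)) := by
      intro ω hω
      rw [Fintype.mem_piFinset]
      intro k
      simp only [Finset.mem_filter, Finset.mem_univ, true_and] at hω ⊢
      exact hω k
    refine (Finset.card_le_card hsub2).trans ?_
    rw [Fintype.card_piFinset]
    rw [Finset.prod_const, Finset.card_univ, Fintype.card_fin]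
    apply Nat.pow_le_pow_left
    have := card_perm_avoiding p.1 p.2
    rw [hp1.2, hp2.2] at this
    exact this
  have hPcard : P.card = (m.choose s0) ^ 2 := by
    rw [hP, Finset.card_product, Finset.card_powersetCard, Finset.card_univ, Fintype.card_fin,
      sq]
  have hbadcard : bad.card < Fintype.card (Fin d → Equiv.Perm (Fin m)) := by
    calc bad.card ≤ ∑ p ∈ P, (Finset.univ.filter (fun ω : Fin d → Equiv.Perm (Fin m) =>
          ∀ k, ∀ x ∈ p.1, ω k x ∉ p.2)).card :=
        (Finset.card_le_card hsub).trans (Finset.card_biUnion_le)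
      _ ≤ P.card * Q ^ d := Finset.sum_le_card_nsmul P _ _ hterm
      _ = (m.choose s0) ^ 2 * Q ^ d := by rw [hPcard]
      _ < (m !) ^ d := hcount
      _ = Fintype.card (Fin d → Equiv.Perm (Fin m)) := by
          rw [Fintype.card_fun, Fintype.card_perm, Fintype.card_fin, Fintype.card_fin]
  have : ∃ ω, ω ∉ bad := by
    by_contra h
    push_neg at h
    have : bad = Finset.univ := Finset.eq_univ_iff_forall.2 h
    rw [this, Finset.card_univ] at hbadcard
    exact lt_irrefl _ hbadcard
  obtain ⟨ω, hω⟩ := this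
  refine ⟨ω, ?_⟩
  intro S T hST hS hT
  by_contra hcon
  push_neg at hcon
  apply hω
  rw [hbad, Finset.mem_filter]
  exact ⟨Finset.mem_univ _, S, T, hST, hS, hT, fun k x hx => hcon x hx k⟩

-- Lemma E
lemma numeric_bound (m s0 d K : ℕ) (c : ℝ) (hm : 1 ≤ m) (hs0m : s0 ≤ m)
    (hc0 : 0 < c) (hc1 : c ≤ 1) (hcm : c * m ≤ (s0 : ℝ))
    (hKd : K * m ≤ s0 * d) (hK4 : 4 * (1 - c) ^ K < 1) :
    (m.choose s0) ^ 2 * ((m - s0)! * (m - s0).descFactorial s0) ^ d < (m !) ^ d := by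
  have hmpos : (0:ℝ) < m := by exact_mod_cast hm
  have h1c0 : (0:ℝ) ≤ 1 - c := by
    have : c * m ≤ m := le_trans hcm (by exact_mod_cast hs0m)
    nlinarith
  have h1c1 : (1:ℝ) - c ≤ 1 := by linarith
  -- choose bound
  have hch : m.choose s0 ≤ 2 ^ m := by
    rcases le_or_gt s0 m with h | h
    · calc m.choose s0 ≤ ∑ i ∈ Finset.range (m+1), m.choose i :=
          Finset.single_le_sum (fun i _ => Nat.zero_le _)
            (Finset.mem_range.2 (Nat.lt_succ_of_le h))
        _ = 2 ^ m := Nat.sum_range_choose m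
    · simp [Nat.choose_eq_zero_of_lt h]
  -- Q * m^s0 ≤ m! * (m-s0)^s0 in ℕ
  set Q := (m - s0)! * (m - s0).descFactorial s0 with hQdef
  have h2 : Q * m ^ s0 ≤ m ! * (m - s0) ^ s0 := by
    calc Q * m ^ s0 = (m - s0)! * ((m - s0).descFactorial s0 * m ^ s0) := by ring
      _ ≤ (m - s0)! * (m.descFactorial s0 * (m - s0) ^ s0) :=
          Nat.mul_le_mul_left _ (descFactorial_ratio' s0 (m - s0) m (Nat.sub_le m s0))
      _ = ((m - s0)! * m.descFactorial s0) * (m - s0) ^ s0 := by ring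
      _ = m ! * (m - s0) ^ s0 := by rw [Nat.factorial_mul_descFactorial hs0m]
  -- move to ℝ
  set ρ : ℝ := ((m - s0 : ℕ) : ℝ) / m with hρdef
  have hρ0 : 0 ≤ ρ := by positivity
  have hρc : ρ ≤ 1 - c := by
    rw [div_le_iff₀ hmpos]
    have hcast : ((m - s0 : ℕ) : ℝ) = (m : ℝ) - s0 := by
      rw [Nat.cast_sub hs0m]
    rw [hcast]
    nlinarith
  have hQr : (Q : ℝ) ≤ (m ! : ℝ) * ρ ^ s0 := by
    have h2r : (Q : ℝ) * (m:ℝ) ^ s0 ≤ (m ! : ℝ) * ((m - s0 : ℕ):ℝ) ^ s0 := by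
      exact_mod_cast h2
    have hpow : (0:ℝ) < (m:ℝ) ^ s0 := by positivity
    rw [hρdef, div_pow, mul_div_assoc' ]
    rw [le_div_iff₀ hpow]
    linarith
  have hQd : (Q : ℝ) ^ d ≤ (m ! : ℝ) ^ d * (1 - c) ^ (K * m) := by
    calc (Q : ℝ) ^ d ≤ ((m ! : ℝ) * ρ ^ s0) ^ d := by
          apply pow_le_pow_left₀ (by positivity) hQr
      _ = (m ! : ℝ) ^ d * ρ ^ (s0 * d) := by rw [mul_pow, ← pow_mul]
      _ ≤ (m ! : ℝ) ^ d * (1 - c) ^ (s0 * d) := by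
          apply mul_le_mul_of_nonneg_left (pow_le_pow_left₀ hρ0 hρc _) (by positivity)
      _ ≤ (m ! : ℝ) ^ d * (1 - c) ^ (K * m) := by
          apply mul_le_mul_of_nonneg_left (pow_le_pow_of_le_one h1c0 h1c1 hKd) (by positivity)
  have hfinal : ((m.choose s0 : ℕ) : ℝ) ^ 2 * (Q : ℝ) ^ d < ((m ! : ℕ) : ℝ) ^ d := by
    have hfac : (0:ℝ) < (m ! : ℝ) ^ d := by positivity
    calc ((m.choose s0 : ℕ) : ℝ) ^ 2 * (Q : ℝ) ^ d
        ≤ ((2:ℝ) ^ m) ^ 2 * ((m ! : ℝ) ^ d * (1 - c) ^ (K * m)) := by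
          apply mul_le_mul _ hQd (by positivity) (by positivity)
          have h2m : ((m.choose s0 : ℕ) : ℝ) ≤ (2:ℝ) ^ m := by exact_mod_cast hch
          exact pow_le_pow_left₀ (by positivity) h2m 2
      _ = (m ! : ℝ) ^ d * ((4 * (1 - c) ^ K) ^ m) := by
          have h4 : ((2:ℝ) ^ m) ^ 2 = 4 ^ m := by
            rw [← pow_mul, mul_comm, pow_mul]; norm_num
          rw [h4, mul_pow, ← pow_mul]
          ring
      _ < (m ! : ℝ) ^ d * 1 := by
          apply mul_lt_mul_of_pos_left _ hfac
          apply pow_lt_one₀ (by positivity) hK4 (by omega)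
      _ = (m ! : ℝ) ^ d := mul_one _
  exact_mod_cast hfinal

/-- For every pair of positive real constants `ε` and `a` there is a constant `b` such
that for every sufficiently large `n` there is a graph `H` on exactly `⌈a * n⌉` vertices
with maximum degree at most `b` such that any two disjoint vertex sets `S`, `T` of size
at least `ε * n` each are joined by at least one edge. -/
theorem sparse_graph_with_crossing_edges (ε a : ℝ) (hε : 0 < ε) (ha : 0 < a) :
    ∃ b : ℕ, ∃ N : ℕ, ∀ n : ℕ, N ≤ n →
      ∃ H : SimpleGraph (Fin ⌈a * n⌉₊),
        (∀ v, (H.neighborSet v).ncard ≤ b) ∧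
        ∀ S T : Finset (Fin ⌈a * n⌉₊), Disjoint S T →
          ε * n ≤ (S.card : ℝ) → ε * n ≤ (T.card : ℝ) →
          ∃ s ∈ S, ∃ t ∈ T, H.Adj s t := by
  classical
  set c : ℝ := min (ε / (2 * a)) (1 / 2) with hcdef
  have hc0 : 0 < c := lt_min (by positivity) (by norm_num)
  have hc12 : c ≤ 1 / 2 := min_le_right _ _
  have hc1 : c ≤ 1 := hc12.trans (by norm_num)
  obtain ⟨K, hK⟩ := exists_pow_lt_of_lt_one (show (0:ℝ) < 1/4 by norm_num)
    (show 1 - c < 1 by linarith)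
  have hK4 : 4 * (1 - c) ^ K < 1 := by linarith
  set d : ℕ := ⌈(K : ℝ) / c⌉₊ with hddef
  refine ⟨2 * d, max 1 ⌈1 / a⌉₊, ?_⟩
  intro n hn
  have hn1 : 1 ≤ n := le_trans (le_max_left _ _) hn
  have hna : 1 / a ≤ (n : ℝ) := Nat.ceil_le.1 (le_trans (le_max_right _ _) hn)
  have hnr1 : (1 : ℝ) ≤ n := by exact_mod_cast hn1
  set m := ⌈a * (n : ℝ)⌉₊ with hmdef
  set s0 := ⌈ε * (n : ℝ)⌉₊ with hs0def
  have hm1 : 1 ≤ m := Nat.one_le_ceil_iff.2 (by positivity)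
  have hmle : (m : ℝ) ≤ a * n + 1 := le_of_lt (Nat.ceil_lt_add_one (by positivity))
  have hεs : ε * n ≤ (s0 : ℝ) := Nat.le_ceil _
  have hcm : c * m ≤ (s0 : ℝ) := by
    have h1 : c * m ≤ (ε / (2 * a)) * (a * n + 1) := by
      apply mul_le_mul (min_le_left _ _) hmle (Nat.cast_nonneg m) (by positivity)
    have h2 : (ε / (2 * a)) * (a * n + 1) = ε * n / 2 + ε / (2 * a) := by
      field_simp
    have h3 : ε / (2 * a) ≤ ε * n / 2 := by
      rw [div_le_iff₀ (by positivity)]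
      have := mul_le_mul_of_nonneg_left hna (le_of_lt (half_pos hε))
      calc ε = (ε / 2) * (1 / a) * (2 * a) := by field_simp
        _ ≤ (ε / 2) * n * (2 * a) := by
            apply mul_le_mul_of_nonneg_right _ (by positivity)
            exact mul_le_mul_of_nonneg_left hna (by positivity)
        _ = ε * n / 2 * (2 * a) := by ring
    linarith
  have hcd : (K : ℝ) ≤ c * d := by
    have h1 : (K : ℝ) / c ≤ (d : ℝ) := Nat.le_ceil _
    calc (K : ℝ) = c * ((K : ℝ) / c) := by field_simp
      _ ≤ c * d := mul_le_mul_of_nonneg_left h1 hc0.le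
  have hKd : K * m ≤ s0 * d := by
    have hr : ((K * m : ℕ) : ℝ) ≤ ((s0 * d : ℕ) : ℝ) := by
      push_cast
      calc (K : ℝ) * m ≤ (c * d) * m := mul_le_mul_of_nonneg_right hcd (Nat.cast_nonneg m)
        _ = (c * m) * d := by ring
        _ ≤ s0 * d := mul_le_mul_of_nonneg_right hcm (Nat.cast_nonneg d)
    exact_mod_cast hr
  by_cases hs0m : s0 ≤ m
  · obtain ⟨ω, hω⟩ := exists_good_tuple m s0 d
      (numeric_bound m s0 d K c hm1 hs0m hc0 hc1 hcm hKd hK4)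
    refine ⟨SimpleGraph.fromRel (fun x y => ∃ k, ω k x = y), ?_, ?_⟩
    · intro v
      set F : Finset (Fin m) :=
        (Finset.univ.image fun k => ω k v) ∪ (Finset.univ.image fun k => (ω k)⁻¹ v) with hF
      have hsub : (SimpleGraph.fromRel (fun x y => ∃ k, ω k x = y)).neighborSet v ⊆ ↑F := by
        intro w hw
        rw [SimpleGraph.mem_neighborSet, SimpleGraph.fromRel_adj] at hw
        obtain ⟨hne, h | h⟩ := hw
        · obtain ⟨k, hk⟩ := h
          apply Finset.mem_coe.2
          apply Finset.mem_union_left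
          exact Finset.mem_image.2 ⟨k, Finset.mem_univ k, hk⟩
        · obtain ⟨k, hk⟩ := h
          apply Finset.mem_coe.2
          apply Finset.mem_union_right
          refine Finset.mem_image.2 ⟨k, Finset.mem_univ k, ?_⟩
          rw [← hk]; simp
      calc (_ : Set (Fin m)).ncard ≤ (↑F : Set (Fin m)).ncard :=
            Set.ncard_le_ncard hsub (Finset.finite_toSet F)
        _ = F.card := Set.ncard_coe_finset F
        _ ≤ (Finset.univ.image fun k => ω k v).card
            + (Finset.univ.image fun k => (ω k)⁻¹ v).card := Finset.card_union_le _ _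
        _ ≤ d + d := by
            apply Nat.add_le_add <;>
              exact (Finset.card_image_le).trans (by simp)
        _ = 2 * d := by ring
    · intro S T hST hSc hTc
      have hS1 : s0 ≤ S.card := Nat.ceil_le.2 hSc
      have hT1 : s0 ≤ T.card := Nat.ceil_le.2 hTc
      obtain ⟨S', hS'sub, hS'⟩ := Finset.exists_subset_card_eq hS1
      obtain ⟨T', hT'sub, hT'⟩ := Finset.exists_subset_card_eq hT1
      have hd' : Disjoint S' T' := hST.mono hS'sub hT'sub
      obtain ⟨x, hx, k, hk⟩ := hω S' T' hd' hS' hT'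
      refine ⟨x, hS'sub hx, ω k x, hT'sub hk, ?_⟩
      rw [SimpleGraph.fromRel_adj]
      refine ⟨?_, Or.inl ⟨k, rfl⟩⟩
      intro heq
      exact Finset.disjoint_left.1 hd' hx (by rw [heq]; exact hk)
  · refine ⟨⊥, ?_, ?_⟩
    · intro v
      have he : ((⊥ : SimpleGraph (Fin m)).neighborSet v) = ∅ := by ext w; simp
      rw [he]
      simp
    · intro S T hST hSc hTc
      exfalso
      have h1 : s0 ≤ S.card := Nat.ceil_le.2 hSc
      have h2 : S.card ≤ m := by
        have := Finset.card_le_univ S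
        simpa using this
      omega
end

section
/- For every integer k ≥ 1 and every real ε > 0 there exists an integer a such that the following holds for every positive integer m. Let H be a graph on at least a·m vertices such that for every pair of disjoint sets S, T ⊆ V(H) with |S| ≥ ε·m and |T| ≥ ε·m we have e_H(S,T) > 0. Then for every family A₁, …, A_{k+1} ⊆ V(H) of pairwise disjoint sets, each of size at least ε·a·m, there is a path (x₁, …, x_m) in H (a sequence of m distinct vertices with xᵢxᵢ₊₁ an edge of H for all 1 ≤ i < m) such that xᵢ ∈ A_j for all 1 ≤ i ≤ m, where j is the unique index in {1, …, k+1} with j ≡ i (mod k+1). -/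
open Finset

lemma fin_succ_mod (k i : ℕ) :
    (⟨i % (k+1), Nat.mod_lt i (Nat.succ_pos k)⟩ : Fin (k+1)) + 1
      = ⟨(i+1) % (k+1), Nat.mod_lt (i+1) (Nat.succ_pos k)⟩ := by
  apply Fin.ext
  simp [Fin.add_def, Fin.val_one']


open Fin.NatCast Fin.CommRing in
set_option maxHeartbeats 2000000 in
lemma aux_dfs {V : Type} [Fintype V] [DecidableEq V]
    (k m : ℕ) (hk : 1 ≤ k) (hm : 0 < m) (ε : ℝ) (hε : 0 < ε)
    (H : SimpleGraph V)
    (hexp : ∀ S T : Finset V, Disjoint S T → ε * m ≤ (S.card : ℝ) → ε * m ≤ (T.card : ℝ) →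
      ∃ s ∈ S, ∃ t ∈ T, H.Adj s t)
    (A : Fin (k+1) → Finset V)
    (hdisj : ∀ i j, i ≠ j → Disjoint (A i) (A j))
    (T : ℕ)
    (hT : ((k:ℝ)+1) * (ε*m) ≤ T)
    (hA1 : ∀ i, ε*m + (ε*m + m) ≤ ((A i).card : ℝ))
    (hA0 : (T:ℝ) + 1 ≤ ((A 0).card : ℝ))
    (hSS : ((k:ℝ)+1)*(ε*m) + ((T:ℝ)+1+m) ≤ ∑ i, ((A i).card : ℝ)) :
    ∀ (n : ℕ) (F : Finset V) (P : List V),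
      2 * (((Finset.univ.biUnion A \ F) \ P.toFinset)).card + P.length ≤ n →
      F ⊆ Finset.univ.biUnion A →
      Disjoint F P.toFinset →
      P.Nodup →
      P.length ≤ m →
      (∀ i (h : i < P.length), P.get ⟨i, h⟩ ∈ A ⟨i % (k+1), Nat.mod_lt i (Nat.succ_pos k)⟩) →
      (∀ i (h : i + 1 < P.length), H.Adj (P.get ⟨i, Nat.lt_of_succ_lt h⟩) (P.get ⟨i+1, h⟩)) →
      (∀ u ∈ F, ∀ j : Fin (k+1), u ∈ A j →
        ∀ w ∈ ((Finset.univ.biUnion A \ F) \ P.toFinset), w ∈ A (j+1) → ¬ H.Adj u w) →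
      F.card ≤ T →
      ∃ x : ℕ → V, Set.InjOn x (Set.Iio m) ∧
        (∀ i, i + 1 < m → H.Adj (x i) (x (i+1))) ∧
        (∀ i < m, x i ∈ A ⟨i % (k+1), Nat.mod_lt i (Nat.succ_pos k)⟩) := by
  intro n
  induction n using Nat.strong_induction_on with
  | _ n ih =>
  intro F P hmeas hFS hFP hnodup hlen hclass hadj hnoarc hFcard
  by_cases hPm : P.length = m
  · -- extract the path
    have h0 : 0 < P.length := by omega
    refine ⟨fun i => P.getD i (P.get ⟨0, h0⟩), ?_, ?_, ?_⟩
    · intro i hi j hj hij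
      simp only [Set.mem_Iio] at hi hj
      dsimp only at hij
      rw [List.getD_eq_get _ _ (⟨i, by omega⟩ : Fin P.length),
          List.getD_eq_get _ _ (⟨j, by omega⟩ : Fin P.length)] at hij
      exact congrArg Fin.val (hnodup.get_inj_iff.mp hij)
    · intro i hi
      dsimp only
      rw [List.getD_eq_get _ _ (⟨i, by omega⟩ : Fin P.length),
          List.getD_eq_get _ _ (⟨i + 1, by omega⟩ : Fin P.length)]
      exact hadj i (by omega)
    · intro i hi
      dsimp only
      rw [List.getD_eq_get _ _ (⟨i, by omega⟩ : Fin P.length)]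
      exact hclass i (by omega)
  · have hPlt : P.length < m := lt_of_le_of_ne hlen hPm
    rcases eq_or_ne P [] with hPe | hPne
    · -- start a new path from A 0
      subst hPe
      have hA0n : T + 1 ≤ (A 0).card := by exact_mod_cast hA0
      have hcard : 0 < ((A 0) \ F).card := by
        have h1 := Finset.card_le_card_sdiff_add_card (s := A 0) (t := F)
        omega
      obtain ⟨w, hw⟩ := Finset.card_pos.mp hcard
      rw [Finset.mem_sdiff] at hw
      have hwS : w ∈ Finset.univ.biUnion A :=
        Finset.mem_biUnion.mpr ⟨0, Finset.mem_univ _, hw.1⟩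
      have hwW : w ∈ (Finset.univ.biUnion A \ F) \ ([] : List V).toFinset := by
        simp only [List.toFinset_nil, Finset.sdiff_empty, Finset.mem_sdiff]
        exact ⟨hwS, hw.2⟩
      have hW1 : ((Finset.univ.biUnion A \ F) \ ([w].toFinset))
          = ((Finset.univ.biUnion A \ F) \ ([] : List V).toFinset).erase w := by
        ext x
        simp only [List.toFinset_cons, List.toFinset_nil, insert_empty_eq,
          Finset.mem_sdiff, Finset.mem_singleton, Finset.mem_erase, List.toFinset_nil,
          Finset.sdiff_empty]
        tauto
      have hWpos : 0 < ((Finset.univ.biUnion A \ F) \ ([] : List V).toFinset).card :=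
        Finset.card_pos.mpr ⟨w, hwW⟩
      refine ih (n-1) (by omega) F [w] ?_ hFS ?_ ?_ (by simpa using (show 1 ≤ m from hm)) ?_ ?_ ?_ hFcard
      · rw [hW1, Finset.card_erase_of_mem hwW]
        simp only [List.length_cons, List.length_nil]
        simp only [List.length_nil] at hmeas
        omega
      · simp only [List.toFinset_cons, List.toFinset_nil, insert_empty_eq,
          Finset.disjoint_singleton_right]
        exact hw.2
      · simp
      · intro i h
        simp only [List.length_cons, List.length_nil] at h
        have hi0 : i = 0 := by omega
        subst hi0
        have he : (⟨0 % (k+1), Nat.mod_lt 0 (Nat.succ_pos k)⟩ : Fin (k+1)) = 0 := by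
          apply Fin.ext; simp
        rw [he]
        exact hw.1
      · intro i h
        simp only [List.length_cons, List.length_nil] at h
        omega
      · intro u hu j hj w' hw' hw'A
        refine hnoarc u hu j hj w' ?_ hw'A
        simp only [List.toFinset_cons, List.toFinset_nil, insert_empty_eq,
          Finset.mem_sdiff, Finset.mem_singleton] at hw'
        simp only [List.toFinset_nil, Finset.sdiff_empty]
        exact Finset.mem_sdiff.mpr hw'.1
    · -- P nonempty; try to extend
      by_cases hext : ∃ w ∈ (((Finset.univ.biUnion A \ F) \ P.toFinset)) ∩
          A ⟨P.length % (k+1), Nat.mod_lt _ (Nat.succ_pos k)⟩, H.Adj (P.getLast hPne) w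
      · -- push
        obtain ⟨w, hwmem, hvw⟩ := hext
        rw [Finset.mem_inter] at hwmem
        obtain ⟨hwW, hwA⟩ := hwmem
        rw [Finset.mem_sdiff] at hwW
        have hwP : w ∉ P.toFinset := hwW.2
        have hwSF := hwW.1
        rw [Finset.mem_sdiff] at hwSF
        have hT2 : (P ++ [w]).toFinset = P.toFinset ∪ {w} := by
          simp [List.toFinset_append]
        have hW2 : ((Finset.univ.biUnion A \ F) \ ((P ++ [w]).toFinset))
            = ((Finset.univ.biUnion A \ F) \ P.toFinset).erase w := by
          ext x
          simp only [hT2, Finset.mem_sdiff, Finset.mem_union, Finset.mem_singleton,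
            Finset.mem_erase]
          tauto
        have hwWm : w ∈ (Finset.univ.biUnion A \ F) \ P.toFinset := by
          rw [Finset.mem_sdiff]; exact hwW
        have hWpos : 0 < ((Finset.univ.biUnion A \ F) \ P.toFinset).card :=
          Finset.card_pos.mpr ⟨w, hwWm⟩
        refine ih (n-1) (by omega) F (P ++ [w]) ?_ hFS ?_ ?_ ?_ ?_ ?_ ?_ hFcard
        · rw [hW2, Finset.card_erase_of_mem hwWm]
          simp only [List.length_append, List.length_cons, List.length_nil]
          omega
        · rw [hT2, Finset.disjoint_union_right]
          exact ⟨hFP, by simp [hwSF.2]⟩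
        · rw [List.nodup_append]
          refine ⟨hnodup, by simp, ?_⟩
          intro x hx
          simp only [List.mem_singleton]
          intro _ hxw hxw'
          subst hxw hxw'
          exact hwP (List.mem_toFinset.mpr hx)
        · simp only [List.length_append, List.length_cons, List.length_nil]
          omega
        · intro i h
          simp only [List.length_append, List.length_cons, List.length_nil] at h
          by_cases h2 : i < P.length
          · rw [List.get_eq_getElem, List.getElem_append_left h2]
            exact hclass i h2
          · have hi : i = P.length := by omega
            subst hi
            rw [List.get_eq_getElem, List.getElem_append_right (le_refl _)]
            simpa using hwA
        · intro i h
          simp only [List.length_append, List.length_cons, List.length_nil] at h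
          by_cases h2 : i + 1 < P.length
          · simp only [List.get_eq_getElem]
            rw [List.getElem_append_left (by omega : i < P.length), List.getElem_append_left h2]
            exact hadj i h2
          · have hi : i + 1 = P.length := by omega
            have hilt : i < P.length := by omega
            have hle1 : P.length ≤ i + 1 := by omega
            have hlt2 : i + 1 - P.length < [w].length := by
              simp only [List.length_cons, List.length_nil]; omega
            simp only [List.get_eq_getElem]
            rw [List.getElem_append_left hilt, List.getElem_append_right hle1]
            have hw1 : [w][i + 1 - P.length]'hlt2 = w := by
              have h0' : i + 1 - P.length = 0 := by omega
              simp [List.get, h0']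
            rw [hw1]
            have hv : P.getLast hPne = P[P.length - 1]'(by omega) :=
              List.getLast_eq_getElem hPne
            have hieq : P[i]'hilt = P[P.length - 1]'(by omega) := by
              congr 1; omega
            rw [hieq, ← hv]
            exact hvw
        · intro u hu j hj w' hw' hw'A
          refine hnoarc u hu j hj w' ?_ hw'A
          rw [hW2] at hw'
          exact Finset.mem_of_mem_erase hw' 
      · -- pop
        push_neg at hext
        have hPpos : 0 < P.length := List.length_pos_iff.mpr hPne
        have hvP : P.getLast hPne ∈ P.toFinset :=
          List.mem_toFinset.mpr (List.getLast_mem hPne)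
        have hvF : P.getLast hPne ∉ F := fun h => (Finset.disjoint_left.mp hFP h) hvP
        have hvget : P.getLast hPne = P.get ⟨P.length - 1, by omega⟩ :=
          List.getLast_eq_getElem hPne
        have hvA : P.getLast hPne ∈
            A ⟨(P.length - 1) % (k+1), Nat.mod_lt _ (Nat.succ_pos k)⟩ := by
          rw [hvget]; exact hclass _ _
        have hcrel : (⟨(P.length - 1) % (k+1), Nat.mod_lt _ (Nat.succ_pos k)⟩ : Fin (k+1)) + 1
            = ⟨P.length % (k+1), Nat.mod_lt _ (Nat.succ_pos k)⟩ := by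
          rw [fin_succ_mod k (P.length - 1)]
          apply Fin.ext
          simp only
          congr 1
          omega
        have hvuniq : ∀ j : Fin (k+1), P.getLast hPne ∈ A j →
            j = ⟨(P.length - 1) % (k+1), Nat.mod_lt _ (Nat.succ_pos k)⟩ := by
          intro j hj
          by_contra hne
          exact (Finset.disjoint_left.mp (hdisj j _ hne) hj) hvA
        have hPdec : P.dropLast ++ [P.getLast hPne] = P := List.dropLast_append_getLast hPne
        have hvnotP' : P.getLast hPne ∉ P.dropLast.toFinset := by
          rw [List.mem_toFinset]
          intro hmem
          have hnd := hnodup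
          rw [← hPdec, List.nodup_append] at hnd
          exact hnd.2.2 _ hmem _ (List.mem_singleton_self _) rfl
        have hPF : P.toFinset = P.dropLast.toFinset ∪ {P.getLast hPne} := by
          conv_lhs => rw [← hPdec]
          simp [List.toFinset_append]
        have hWeq : ((Finset.univ.biUnion A \ insert (P.getLast hPne) F) \ P.dropLast.toFinset)
            = ((Finset.univ.biUnion A \ F) \ P.toFinset) := by
          ext x
          simp only [Finset.mem_sdiff, Finset.mem_insert, hPF, Finset.mem_union,
            Finset.mem_singleton]
          tauto
        have hnoarc' : ∀ u ∈ insert (P.getLast hPne) F, ∀ j : Fin (k+1), u ∈ A j →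
            ∀ w ∈ ((Finset.univ.biUnion A \ insert (P.getLast hPne) F) \ P.dropLast.toFinset),
              w ∈ A (j+1) → ¬H.Adj u w := by
          intro u hu j hj w hw hwA
          rw [Finset.mem_insert] at hu
          rcases hu with hu | hu
          · subst hu
            have hjc := hvuniq j hj
            intro hadjvw
            refine hext w ?_ hadjvw
            rw [Finset.mem_inter]
            refine ⟨by rw [hWeq] at hw; exact hw, ?_⟩
            rw [hjc, hcrel] at hwA
            exact hwA
          · refine hnoarc u hu j hj w ?_ hwA
            rw [hWeq] at hw
            exact hw
        have hlenP' : P.dropLast.length = P.length - 1 := List.length_dropLast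
        by_cases hF'c : (insert (P.getLast hPne) F).card ≤ T
        · have hvS : P.getLast hPne ∈ Finset.univ.biUnion A :=
            Finset.mem_biUnion.mpr ⟨_, Finset.mem_univ _, hvA⟩
          refine ih (n-1) (by omega) (insert (P.getLast hPne) F) P.dropLast
            ?_ ?_ ?_ (hnodup.sublist (List.dropLast_sublist P)) (by omega) ?_ ?_ hnoarc' hF'c
          · rw [hWeq]
            omega
          · exact Finset.insert_subset hvS hFS
          · rw [Finset.disjoint_insert_left]
            refine ⟨hvnotP', ?_⟩
            refine Finset.disjoint_of_subset_right ?_ hFP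
            intro x hx
            rw [List.mem_toFinset] at hx ⊢
            exact List.dropLast_sublist P |>.mem hx
          · intro i h
            simp only [List.get_eq_getElem, List.getElem_dropLast]
            exact hclass i (by omega)
          · intro i h
            simp only [List.get_eq_getElem, List.getElem_dropLast]
            exact hadj i (by omega)
        · -- contradiction: too many finished vertices
          exfalso
          set F' := insert (P.getLast hPne) F with hF'def
          set W' := ((Finset.univ.biUnion A \ F') \ P.dropLast.toFinset) with hW'def
          have hF'S : F' ⊆ Finset.univ.biUnion A :=
            Finset.insert_subset (Finset.mem_biUnion.mpr ⟨_, Finset.mem_univ _, hvA⟩) hFS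
          have hF'card : F'.card = F.card + 1 := Finset.card_insert_of_notMem hvF
          have hF'T : T + 1 ≤ F'.card := by omega
          have hF'T2 : F'.card ≤ T + 1 := by omega
          have hW'S : W' ⊆ Finset.univ.biUnion A := by
            intro x hx
            rw [hW'def] at hx
            rw [Finset.mem_sdiff] at hx
            exact (Finset.mem_sdiff.mp hx.1).1
          have hdisj' : ∀ (B : Finset V), B ⊆ Finset.univ.biUnion A →
              ∑ j, (B ∩ A j).card = B.card := by
            intro B hB
            have hBU : Finset.univ.biUnion (fun j => B ∩ A j) = B := by
              ext x
              simp only [Finset.mem_biUnion, Finset.mem_inter, Finset.mem_univ, true_and]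
              constructor
              · rintro ⟨j, hx, _⟩
                exact hx
              · intro hx
                obtain ⟨j, _, hj⟩ := Finset.mem_biUnion.mp (hB hx)
                exact ⟨j, hx, hj⟩
            conv_rhs => rw [← hBU]
            exact (Finset.card_biUnion (fun i _ j _ hne =>
              (hdisj i j hne).mono Finset.inter_subset_right Finset.inter_subset_right)).symm
          have hsumF : ∑ j, (F' ∩ A j).card = F'.card := hdisj' F' hF'S
          have hsumW : ∑ j, (W' ∩ A j).card = W'.card := hdisj' W' hW'S
          have hP'm : P.dropLast.toFinset.card ≤ m :=
            le_trans (List.toFinset_card_le _) (by omega)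
          have hFW : Disjoint F' W' := by
            rw [hW'def]
            exact Finset.disjoint_of_subset_right Finset.sdiff_subset Finset.disjoint_sdiff
          have step : ∀ j : Fin (k+1), ε*m ≤ ((F' ∩ A j).card : ℝ) →
              ((W' ∩ A (j+1)).card : ℝ) < ε*m ∧ ε*m ≤ ((F' ∩ A (j+1)).card : ℝ) := by
            intro j hj
            have hWlt : ((W' ∩ A (j+1)).card : ℝ) < ε*m := by
              by_contra hge
              push_neg at hge
              obtain ⟨s, hs, t, ht, hst⟩ := hexp (F' ∩ A j) (W' ∩ A (j+1))
                (Finset.disjoint_of_subset_left Finset.inter_subset_left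
                  (Finset.disjoint_of_subset_right Finset.inter_subset_left hFW)) hj hge
              rw [Finset.mem_inter] at hs ht
              exact hnoarc' s hs.1 j hs.2 t ht.1 ht.2 hst
            refine ⟨hWlt, ?_⟩
            have hsub : A (j+1) ⊆ (F' ∩ A (j+1)) ∪ ((W' ∩ A (j+1)) ∪ P.dropLast.toFinset) := by
              intro x hx
              have hxS : x ∈ Finset.univ.biUnion A :=
                Finset.mem_biUnion.mpr ⟨j+1, Finset.mem_univ _, hx⟩
              simp only [Finset.mem_union, Finset.mem_inter, hW'def, Finset.mem_sdiff]
              by_cases h1 : x ∈ F'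
              · exact Or.inl ⟨h1, hx⟩
              · by_cases h2 : x ∈ P.dropLast.toFinset
                · exact Or.inr (Or.inr h2)
                · exact Or.inr (Or.inl ⟨⟨⟨hxS, h1⟩, h2⟩, hx⟩)
            have hc1 := Finset.card_le_card hsub
            have hc2 := Finset.card_union_le (F' ∩ A (j+1)) ((W' ∩ A (j+1)) ∪ P.dropLast.toFinset)
            have hc3 := Finset.card_union_le (W' ∩ A (j+1)) P.dropLast.toFinset
            have hc4 : (A (j+1)).card ≤ (F' ∩ A (j+1)).card + ((W' ∩ A (j+1)).card + m) := by
              omega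
            have hc5 : ((A (j+1)).card : ℝ) ≤ ((F' ∩ A (j+1)).card : ℝ)
                + (((W' ∩ A (j+1)).card : ℝ) + m) := by
              exact_mod_cast hc4
            have hA1' := hA1 (j+1)
            linarith
          have exj : ∃ j : Fin (k+1), ε*m ≤ ((F' ∩ A j).card : ℝ) := by
            by_contra hall
            push_neg at hall
            have h1 : (∑ j, ((F' ∩ A j).card : ℝ)) < ∑ _j : Fin (k+1), ε*m :=
              Finset.sum_lt_sum_of_nonempty Finset.univ_nonempty (fun j _ => hall j)
            rw [Finset.sum_const, Finset.card_univ, Fintype.card_fin, nsmul_eq_mul] at h1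
            have h2 : (∑ j, ((F' ∩ A j).card : ℝ)) = (F'.card : ℝ) := by
              rw [← hsumF]
              push_cast
              ring
            have h3 : ((T : ℝ) + 1) ≤ (F'.card : ℝ) := by exact_mod_cast hF'T
            rw [h2] at h1
            push_cast at h1
            linarith [hT]
          obtain ⟨j₀, hj₀⟩ := exj
          have alld : ∀ d : ℕ, ε*m ≤ ((F' ∩ A (j₀ + (d : Fin (k+1)))).card : ℝ) := by
            intro d
            induction d with
            | zero => simpa using hj₀
            | succ d hd =>
              have h2 := (step _ hd).2
              have h3 : j₀ + ((d+1 : ℕ) : Fin (k+1)) = (j₀ + ((d : ℕ) : Fin (k+1))) + 1 := by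
                push_cast
                ring
              rw [h3]
              exact h2
          have allF : ∀ j : Fin (k+1), ε*m ≤ ((F' ∩ A j).card : ℝ) := by
            intro j
            have h := alld ((j - j₀).val)
            rwa [Fin.cast_val_eq_self, add_comm, sub_add_cancel] at h
          have allW : ∀ j : Fin (k+1), ((W' ∩ A j).card : ℝ) < ε*m := by
            intro j
            have h := (step (j-1) (allF (j-1))).1
            rwa [sub_add_cancel] at h
          have hWlt : (W'.card : ℝ) < ((k:ℝ)+1) * (ε*m) := by
            have h1 : (∑ j, ((W' ∩ A j).card : ℝ)) < ∑ _j : Fin (k+1), ε*m :=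
              Finset.sum_lt_sum_of_nonempty Finset.univ_nonempty (fun j _ => allW j)
            rw [Finset.sum_const, Finset.card_univ, Fintype.card_fin, nsmul_eq_mul] at h1
            have h2 : (∑ j, ((W' ∩ A j).card : ℝ)) = (W'.card : ℝ) := by
              rw [← hsumW]
              push_cast
              ring
            rw [h2] at h1
            push_cast at h1
            linarith
          have hcover : Finset.univ.biUnion A ⊆ W' ∪ (F' ∪ P.dropLast.toFinset) := by
            intro x hx
            simp only [Finset.mem_union, hW'def, Finset.mem_sdiff]
            by_cases h1 : x ∈ F'
            · exact Or.inr (Or.inl h1)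
            · by_cases h2 : x ∈ P.dropLast.toFinset
              · exact Or.inr (Or.inr h2)
              · exact Or.inl ⟨⟨hx, h1⟩, h2⟩
          have hc1 := Finset.card_le_card hcover
          have hc2 := Finset.card_union_le W' (F' ∪ P.dropLast.toFinset)
          have hc3 := Finset.card_union_le F' P.dropLast.toFinset
          have hSScard : (Finset.univ.biUnion A).card = ∑ j, (A j).card :=
            Finset.card_biUnion (fun i _ j _ hne => hdisj i j hne)
          have hc4 : ∑ j, (A j).card ≤ W'.card + (T + 1 + m) := by omega
          have hc5 : (∑ j, ((A j).card : ℝ)) ≤ (W'.card : ℝ) + ((T:ℝ) + 1 + m) := by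
            exact_mod_cast hc4
          linarith [hSS]

/-- For every `k ≥ 1` and `ε > 0` there is an integer `a` such that for every `m ≥ 1`
the following holds.  If `H` is a graph on at least `a * m` vertices in which any two
disjoint vertex sets of size at least `ε * m` are joined by an edge, then for every
family `A₀, …, A_k` of `k + 1` pairwise disjoint vertex sets, each of size at least
`ε * a * m`, there is a path `(x₀, …, x_{m-1})` in `H` whose `i`-th vertex belongs to
`A_{i mod (k+1)}` (this is the 1-based condition `xᵢ ∈ A_j` for `j ≡ i (mod k+1)`). -/
theorem alternating_path_through_sets (k : ℕ) (hk : 1 ≤ k) (ε : ℝ) (hε : 0 < ε) :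
    ∃ a : ℕ, ∀ m : ℕ, 0 < m →
      ∀ (V : Type) (_ : Fintype V) (_ : DecidableEq V) (H : SimpleGraph V),
        a * m ≤ Fintype.card V →
        (∀ S T : Finset V, Disjoint S T →
          ε * m ≤ (S.card : ℝ) → ε * m ≤ (T.card : ℝ) →
          ∃ s ∈ S, ∃ t ∈ T, H.Adj s t) →
        ∀ A : Fin (k + 1) → Finset V,
          (∀ i j, i ≠ j → Disjoint (A i) (A j)) →
          (∀ i, ε * (a : ℝ) * m ≤ ((A i).card : ℝ)) →
          ∃ x : ℕ → V, Set.InjOn x (Set.Iio m) ∧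
            (∀ i, i + 1 < m → H.Adj (x i) (x (i + 1))) ∧
            (∀ i < m, x i ∈ A ⟨i % (k + 1), Nat.mod_lt i (Nat.succ_pos k)⟩) := by
  refine ⟨k + 4 + ⌈3/ε⌉₊, ?_⟩
  intro m hm V hV hVd H hcard hexp A hdisj hA
  have hm1 : (1:ℝ) ≤ m := by exact_mod_cast hm
  have hεm : 0 < ε * m := by positivity
  have hk1 : (1:ℝ) ≤ k := by exact_mod_cast hk
  have hce : (3:ℝ) ≤ ε * (⌈3/ε⌉₊ : ℝ) := by
    have h1 : 3/ε ≤ (⌈3/ε⌉₊ : ℝ) := Nat.le_ceil _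
    rw [div_le_iff₀ hε] at h1
    linarith [h1]
  have hacast : ((k + 4 + ⌈3/ε⌉₊ : ℕ) : ℝ) = (k:ℝ) + 4 + (⌈3/ε⌉₊ : ℝ) := by push_cast; ring
  have key : ∀ i, ((k:ℝ)+1)*(ε*m) + (3*(ε*m) + 3*m) ≤ ((A i).card : ℝ) := by
    intro i
    have h1 := hA i
    rw [hacast] at h1
    nlinarith [mul_le_mul_of_nonneg_right hce (le_of_lt (lt_of_lt_of_le zero_lt_one hm1)),
      mul_pos hε (lt_of_lt_of_le zero_lt_one hm1)]
  set T : ℕ := ⌈((k:ℝ)+1)*(ε*m)⌉₊ with hTdef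
  have hT : ((k:ℝ)+1) * (ε*m) ≤ T := Nat.le_ceil _
  have hTub : (T:ℝ) < ((k:ℝ)+1)*(ε*m) + 1 := by
    apply Nat.ceil_lt_add_one
    positivity
  have hA1 : ∀ i, ε*m + (ε*m + m) ≤ ((A i).card : ℝ) := by
    intro i
    have := key i
    nlinarith [hεm, hm1, hk1]
  have hA0 : (T:ℝ) + 1 ≤ ((A (0 : Fin (k+1))).card : ℝ) := by
    have := key 0
    nlinarith [hεm, hm1, hk1]
  have hSS : ((k:ℝ)+1)*(ε*m) + ((T:ℝ)+1+m) ≤ ∑ i, ((A i).card : ℝ) := by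
    have hsum : ∑ _i : Fin (k+1), (((k:ℝ)+1)*(ε*m) + (3*(ε*m) + 3*m)) ≤ ∑ i, ((A i).card : ℝ) :=
      Finset.sum_le_sum (fun i _ => key i)
    rw [Finset.sum_const, Finset.card_univ, Fintype.card_fin, nsmul_eq_mul] at hsum
    push_cast at hsum
    nlinarith [hεm, hm1, hk1]
  have := aux_dfs k m hk hm ε hε H hexp A hdisj T hT hA1 hA0 hSS
    (2 * (Finset.univ.biUnion A).card) ∅ []
  refine this ?_ ?_ ?_ ?_ ?_ ?_ ?_ ?_ ?_
  · simp
  · exact Finset.empty_subset _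
  · simp
  · simp
  · simp
  · intro i h
    simp at h
  · intro i h
    simp at h
  · intro u hu
    simp at hu
  · simp
end

section
/- Let ℓ = 17, k = 2ℓ, t = 8k + 40k² + 5, and let t′ be any integer such that every 2-colouring of the triples of a complete 3-uniform hypergraph on t′ vertices contains a monochromatic complete 3-uniform hypergraph on t vertices. Let G be a graph, let G^k be its k-th power (u,v adjacent in G^k iff their distance in G is between 1 and k), let G^k(t′) be obtained from G^k by replacing every vertex v by a clique H(v) on t′ vertices and every edge by a complete bipartite graph between the corresponding cliques, and let H be the 3-uniform hypergraph on V(G^k(t′)) whose edges are exactly the vertex sets of triangles of G^k(t′). Fix a colouring of the edges of H with colours red and blue, let V ⊆ V(G) be a set of vertices such that for each v ∈ V a set H′(v) ⊆ H(v) of t vertices is chosen all of whose triples are blue edges of H, and let F be the (2,3)-graph on V with uv ∈ E(F) iff there is a blue (6,6)-connector between H′(u) and H′(v), and uv(w) ∈ E(F) iff there is a blue (6,3,6)-connector between H′(u) and H′(v) through H′(w). If F contains a (2,3)-path on n vertices, then H contains a blue tight path on n vertices, i.e., a blue copy of P⁽³⁾ₙ. -/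
/-- The `k`-th power of a graph `G`: two distinct vertices are adjacent iff their
distance in `G` is between `1` and `k`, i.e. they are joined by a walk of length
at most `k`. -/
def graphPow {V : Type} (G : SimpleGraph V) (k : ℕ) : SimpleGraph V where
  Adj u v := u ≠ v ∧ ∃ p : G.Walk u v, p.length ≤ k
  symm := by
    constructor
    rintro u v ⟨hne, p, hp⟩
    exact ⟨hne.symm, p.reverse, by simpa using hp⟩
  loopless := by constructor; rintro u ⟨h, -⟩; exact h rfl

/-- The blow-up `G(t')` of a graph `G`: every vertex is replaced by a clique on `t'`
vertices and every edge by a complete bipartite graph between the corresponding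
cliques. -/
def blowupGraph {V : Type} (G : SimpleGraph V) (t' : ℕ) : SimpleGraph (V × Fin t') where
  Adj a b := (a.1 = b.1 ∧ a.2 ≠ b.2) ∨ G.Adj a.1 b.1
  symm := by
    constructor
    rintro a b (⟨h1, h2⟩ | h)
    · exact Or.inl ⟨h1.symm, h2.symm⟩
    · exact Or.inr h.symm
  loopless := by
    constructor
    rintro a (⟨-, h⟩ | h)
    · exact h rfl
    · exact G.loopless.irrefl _ h

/-- `{a, b, c}` spans a triangle of the graph `B`, i.e. it is an edge of the 3-uniform
hypergraph `H` of triangles of `B`. -/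
def IsTriangle {W : Type} (B : SimpleGraph W) (a b c : W) : Prop :=
  B.Adj a b ∧ B.Adj a c ∧ B.Adj b c

/-- `{a, b, c}` is a blue edge of the triangle hypergraph of `B` under the colouring
`χ` (where `true` is blue). -/
def BlueTriple {W : Type} [DecidableEq W] (B : SimpleGraph W) (χ : Finset W → Bool)
    (a b c : W) : Prop :=
  IsTriangle B a b c ∧ χ {a, b, c} = true

/-- A blue `(2,2)`-connector between `A` and `C` with vertices `x1, x2 ∈ A` and
`y1, y2 ∈ C`: the triples `x1x2y1` and `y1y2x1` are blue edges. -/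
def Conn22 {W : Type} [DecidableEq W] (B : SimpleGraph W) (χ : Finset W → Bool)
    (A C : Finset W) (x1 x2 y1 y2 : W) : Prop :=
  x1 ∈ A ∧ x2 ∈ A ∧ y1 ∈ C ∧ y2 ∈ C ∧ ({x1, x2, y1, y2} : Finset W).card = 4 ∧
  BlueTriple B χ x1 x2 y1 ∧ BlueTriple B χ y1 y2 x1

/-- A blue `(6,6)`-connector between `A` and `C`: three pairwise vertex-disjoint blue
`(2,2)`-connectors between `A` and `C`. -/
def Conn66 {W : Type} [DecidableEq W] (B : SimpleGraph W) (χ : Finset W → Bool)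
    (A C : Finset W) : Prop :=
  ∃ q : Fin 3 → W × W × W × W,
    (∀ i, Conn22 B χ A C (q i).1 (q i).2.1 (q i).2.2.1 (q i).2.2.2) ∧
    (∀ i j, i ≠ j →
      Disjoint ({(q i).1, (q i).2.1, (q i).2.2.1, (q i).2.2.2} : Finset W)
               ({(q j).1, (q j).2.1, (q j).2.2.1, (q j).2.2.2} : Finset W))

/-- A blue `(2,1,2)`-connector between `A` and `C` through `Z` with vertices
`x1, x2 ∈ A`, `z ∈ Z`, `y1, y2 ∈ C`: the triples `x1x2z`, `x1zy1` and `zy1y2` are blue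
edges. -/
def Conn212 {W : Type} [DecidableEq W] (B : SimpleGraph W) (χ : Finset W → Bool)
    (A C Z : Finset W) (x1 x2 z y1 y2 : W) : Prop :=
  x1 ∈ A ∧ x2 ∈ A ∧ z ∈ Z ∧ y1 ∈ C ∧ y2 ∈ C ∧
  ({x1, x2, z, y1, y2} : Finset W).card = 5 ∧
  BlueTriple B χ x1 x2 z ∧ BlueTriple B χ x1 z y1 ∧ BlueTriple B χ z y1 y2

/-- A blue `(6,3,6)`-connector between `A` and `C` through `Z`: three pairwise
vertex-disjoint blue `(2,1,2)`-connectors between `A` and `C` through `Z`. -/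
def Conn636 {W : Type} [DecidableEq W] (B : SimpleGraph W) (χ : Finset W → Bool)
    (A C Z : Finset W) : Prop :=
  ∃ q : Fin 3 → W × W × W × W × W,
    (∀ i, Conn212 B χ A C Z (q i).1 (q i).2.1 (q i).2.2.1 (q i).2.2.2.1 (q i).2.2.2.2) ∧
    (∀ i j, i ≠ j →
      Disjoint
        ({(q i).1, (q i).2.1, (q i).2.2.1, (q i).2.2.2.1, (q i).2.2.2.2} : Finset W)
        ({(q j).1, (q j).2.1, (q j).2.2.1, (q j).2.2.2.1, (q j).2.2.2.2} : Finset W))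

section Aux
variable {W : Type} [DecidableEq W]

lemma card3_le (a b c : W) : ({a, b, c} : Finset W).card ≤ 3 := by
  have h1 := Finset.card_insert_le a ({b, c} : Finset W)
  have h2 := Finset.card_insert_le b ({c} : Finset W)
  simp only [Finset.card_singleton] at h1 h2
  omega

lemma card4_le (a b c d : W) : ({a, b, c, d} : Finset W).card ≤ 4 := by
  have h1 := Finset.card_insert_le a ({b, c, d} : Finset W)
  have h2 := card3_le b c d
  omega

lemma card4_ne {a b c d : W} (h : ({a, b, c, d} : Finset W).card = 4) :
    a ≠ b ∧ a ≠ c ∧ a ≠ d ∧ b ≠ c ∧ b ≠ d ∧ c ≠ d := by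
  refine ⟨fun e => ?_, fun e => ?_, fun e => ?_, fun e => ?_, fun e => ?_, fun e => ?_⟩ <;>
    subst e
  · have hs : ({a, a, c, d} : Finset W) ⊆ {a, c, d} := by intro y hy; simp at hy ⊢; tauto
    have := (Finset.card_le_card hs).trans (card3_le a c d); omega
  · have hs : ({a, b, a, d} : Finset W) ⊆ {a, b, d} := by intro y hy; simp at hy ⊢; tauto
    have := (Finset.card_le_card hs).trans (card3_le a b d); omega
  · have hs : ({a, b, c, a} : Finset W) ⊆ {a, b, c} := by intro y hy; simp at hy ⊢; tauto
    have := (Finset.card_le_card hs).trans (card3_le a b c); omega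
  · have hs : ({a, b, b, d} : Finset W) ⊆ {a, b, d} := by intro y hy; simp at hy ⊢; tauto
    have := (Finset.card_le_card hs).trans (card3_le a b d); omega
  · have hs : ({a, b, c, b} : Finset W) ⊆ {a, b, c} := by intro y hy; simp at hy ⊢; tauto
    have := (Finset.card_le_card hs).trans (card3_le a b c); omega
  · have hs : ({a, b, c, c} : Finset W) ⊆ {a, b, c} := by intro y hy; simp at hy ⊢; tauto
    have := (Finset.card_le_card hs).trans (card3_le a b c); omega

lemma card5_ne {a b c d e : W} (h : ({a, b, c, d, e} : Finset W).card = 5) :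
    a ≠ b ∧ a ≠ c ∧ a ≠ d ∧ a ≠ e ∧ b ≠ c ∧ b ≠ d ∧ b ≠ e ∧ c ≠ d ∧ c ≠ e ∧ d ≠ e := by
  refine ⟨fun x => ?_, fun x => ?_, fun x => ?_, fun x => ?_, fun x => ?_, fun x => ?_,
    fun x => ?_, fun x => ?_, fun x => ?_, fun x => ?_⟩ <;> subst x
  · have hs : ({a, a, c, d, e} : Finset W) ⊆ {a, c, d, e} := by
      intro y hy; simp at hy ⊢; tauto
    have := (Finset.card_le_card hs).trans (card4_le a c d e); omega
  · have hs : ({a, b, a, d, e} : Finset W) ⊆ {a, b, d, e} := by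
      intro y hy; simp at hy ⊢; tauto
    have := (Finset.card_le_card hs).trans (card4_le a b d e); omega
  · have hs : ({a, b, c, a, e} : Finset W) ⊆ {a, b, c, e} := by
      intro y hy; simp at hy ⊢; tauto
    have := (Finset.card_le_card hs).trans (card4_le a b c e); omega
  · have hs : ({a, b, c, d, a} : Finset W) ⊆ {a, b, c, d} := by
      intro y hy; simp at hy ⊢; tauto
    have := (Finset.card_le_card hs).trans (card4_le a b c d); omega
  · have hs : ({a, b, b, d, e} : Finset W) ⊆ {a, b, d, e} := by
      intro y hy; simp at hy ⊢; tauto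
    have := (Finset.card_le_card hs).trans (card4_le a b d e); omega
  · have hs : ({a, b, c, b, e} : Finset W) ⊆ {a, b, c, e} := by
      intro y hy; simp at hy ⊢; tauto
    have := (Finset.card_le_card hs).trans (card4_le a b c e); omega
  · have hs : ({a, b, c, d, b} : Finset W) ⊆ {a, b, c, d} := by
      intro y hy; simp at hy ⊢; tauto
    have := (Finset.card_le_card hs).trans (card4_le a b c d); omega
  · have hs : ({a, b, c, c, e} : Finset W) ⊆ {a, b, c, e} := by
      intro y hy; simp at hy ⊢; tauto
    have := (Finset.card_le_card hs).trans (card4_le a b c e); omega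
  · have hs : ({a, b, c, d, c} : Finset W) ⊆ {a, b, c, d} := by
      intro y hy; simp at hy ⊢; tauto
    have := (Finset.card_le_card hs).trans (card4_le a b c d); omega
  · have hs : ({a, b, c, d, d} : Finset W) ⊆ {a, b, c, d} := by
      intro y hy; simp at hy ⊢; tauto
    have := (Finset.card_le_card hs).trans (card4_le a b c d); omega

lemma pick_avoid (S : Fin 3 → Finset W)
    (hd : ∀ i j, i ≠ j → Disjoint (S i) (S j)) (p q : W) :
    ∃ i, p ∉ S i ∧ q ∉ S i := by
  have key : ∀ r : W, ∀ i j, i ≠ j → r ∈ S i → r ∈ S j → False :=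
    fun r i j hij hi hj => Finset.disjoint_left.mp (hd i j hij) hi hj
  by_contra hcon
  push_neg at hcon
  rcases em (p ∈ S 0) with h0 | h0 <;> rcases em (p ∈ S 1) with h1 | h1 <;>
    rcases em (p ∈ S 2) with h2 | h2
  · exact key p 0 1 (by decide) h0 h1
  · exact key p 0 1 (by decide) h0 h1
  · exact key p 0 2 (by decide) h0 h2
  · exact key q 1 2 (by decide) (hcon 1 h1) (hcon 2 h2)
  · exact key p 1 2 (by decide) h1 h2
  · exact key q 0 2 (by decide) (hcon 0 h0) (hcon 2 h2)
  · exact key q 0 1 (by decide) (hcon 0 h0) (hcon 1 h1)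
  · exact key q 0 1 (by decide) (hcon 0 h0) (hcon 1 h1)

lemma blueTriple_swap {B : SimpleGraph W} {χ : Finset W → Bool} {a b c : W}
    (h : BlueTriple B χ a b c) : BlueTriple B χ b a c := by
  obtain ⟨⟨h1, h2, h3⟩, hχ⟩ := h
  refine ⟨⟨h1.symm, h3, h2⟩, ?_⟩
  have he : ({b, a, c} : Finset W) = {a, b, c} := by ext y; simp; tauto
  rw [he]; exact hχ

lemma blueTriple_rot {B : SimpleGraph W} {χ : Finset W → Bool} {a b c : W}
    (h : BlueTriple B χ a b c) : BlueTriple B χ c a b := by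
  obtain ⟨⟨h1, h2, h3⟩, hχ⟩ := h
  refine ⟨⟨h2.symm, h3.symm, h1⟩, ?_⟩
  have he : ({c, a, b} : Finset W) = {a, b, c} := by ext y; simp; tauto
  rw [he]; exact hχ

end Aux

structure SegData (W : Type) where
  a : W
  b : W
  zo : Option W
  c : W
  d : W

def SegOK {VG : Type} [DecidableEq VG] {t' : ℕ}
    (B : SimpleGraph (VG × Fin t')) (χ : Finset (VG × Fin t') → Bool)
    (VS : Set VG) (H' : VG → Finset (VG × Fin t')) (x : ℕ → VG) (w : ℕ → Option VG)
    (n i : ℕ) (c' d' : VG × Fin t') (p : SegData (VG × Fin t')) : Prop :=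
  p.a ∈ H' (x i) ∧ p.b ∈ H' (x i) ∧ p.c ∈ H' (x (i + 1)) ∧ p.d ∈ H' (x (i + 1)) ∧
  p.a ≠ p.b ∧ p.c ≠ p.d ∧
  p.a ≠ c' ∧ p.a ≠ d' ∧ p.b ≠ c' ∧ p.b ≠ d' ∧ p.c ≠ c' ∧ p.c ≠ d' ∧ p.d ≠ c' ∧ p.d ≠ d' ∧
  (match p.zo with
   | none => BlueTriple B χ p.a p.b p.c ∧ BlueTriple B χ p.c p.d p.a
   | some z => w i = some z.1 ∧ z.1 ∈ VS ∧ (∀ j < n, z.1 ≠ x j) ∧ z ∈ H' z.1 ∧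
       z ≠ c' ∧ z ≠ d' ∧ z ≠ p.a ∧ z ≠ p.b ∧ z ≠ p.c ∧ z ≠ p.d ∧
       BlueTriple B χ p.a p.b z ∧ BlueTriple B χ p.a z p.c ∧ BlueTriple B χ z p.c p.d)

theorem aux_construction {VG : Type} [DecidableEq VG] {t' : ℕ}
    (B : SimpleGraph (VG × Fin t')) (χ : Finset (VG × Fin t') → Bool)
    (V : Set VG) (H' : VG → Finset (VG × Fin t')) (t : ℕ) (ht5 : 5 ≤ t)
    (hadj : ∀ u v : VG × Fin t', u.1 = v.1 → u.2 ≠ v.2 → B.Adj u v)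
    (hH' : ∀ v ∈ V, (H' v).card = t ∧ (∀ x ∈ H' v, x.1 = v) ∧
      ∀ a b c : VG × Fin t', a ∈ H' v → b ∈ H' v → c ∈ H' v →
        a ≠ b → a ≠ c → b ≠ c → χ {a, b, c} = true)
    (n : ℕ) (x : ℕ → VG)
    (hxV : ∀ i < n, x i ∈ V) (hxinj : Set.InjOn x (Set.Iio n))
    (w : ℕ → Option VG)
    (hpath : ∀ i, i + 1 < n →
      (w i = none ∧ Conn66 B χ (H' (x i)) (H' (x (i + 1)))) ∨
      (∃ z, w i = some z ∧ z ∈ V ∧ (∀ j < n, z ≠ x j) ∧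
        Conn636 B χ (H' (x i)) (H' (x (i + 1))) (H' z)))
    (hw : ∀ i j, i + 1 < n → j + 1 < n → w i ≠ none → w i = w j → i = j)
    (hn : 2 ≤ n) (dflt : VG × Fin t') :
    ∃ f : ℕ → VG × Fin t', Set.InjOn f (Set.Iio n) ∧
      ∀ i, i + 2 < n →
        IsTriangle B (f i) (f (i + 1)) (f (i + 2)) ∧
        χ {f i, f (i + 1), f (i + 2)} = true := by
  classical
  -- first coordinates
  have hfst : ∀ v ∈ V, ∀ p ∈ H' v, (p : VG × Fin t').1 = v := fun v hv => (hH' v hv).2.1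
  have hxne : ∀ i j, i < n → j < n → i ≠ j → x i ≠ x j := by
    intro i j hi hj hij h
    exact hij (hxinj (Set.mem_Iio.mpr hi) (Set.mem_Iio.mpr hj) h)
  -- cluster triples
  have hClus : ∀ v ∈ V, ∀ p q r : VG × Fin t', p ∈ H' v → q ∈ H' v → r ∈ H' v →
      p ≠ q → p ≠ r → q ≠ r → IsTriangle B p q r ∧ χ {p, q, r} = true := by
    intro v hv p q r hp hq hr h1 h2 h3
    obtain ⟨-, hf, hblue⟩ := hH' v hv
    have adj : ∀ s u : VG × Fin t', s ∈ H' v → u ∈ H' v → s ≠ u → B.Adj s u := by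
      intro s u hs hu hsu
      refine hadj s u ((hf s hs).trans (hf u hu).symm) (fun h2' => hsu ?_)
      exact Prod.ext ((hf s hs).trans (hf u hu).symm) h2'
    exact ⟨⟨adj _ _ hp hq h1, adj _ _ hp hr h2, adj _ _ hq hr h3⟩,
      hblue p q r hp hq hr h1 h2 h3⟩
  -- choosing a segment avoiding two old vertices
  have exNext : ∀ (i : ℕ) (c' d' : VG × Fin t'), ∃ p : SegData (VG × Fin t'),
      i + 1 < n → SegOK B χ V H' x w n i c' d' p := by
    intro i c' d'
    by_cases h : i + 1 < n
    · rcases hpath i h with ⟨-, hc⟩ | ⟨z, hwz, hzV, hzx, hc⟩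
      · obtain ⟨q, hq, hdis⟩ := hc
        obtain ⟨i₀, hc', hd'⟩ := pick_avoid
          (fun j => {(q j).1, (q j).2.1, (q j).2.2.1, (q j).2.2.2}) hdis c' d'
        obtain ⟨hx1, hx2, hy1, hy2, hcard, hT1, hT2⟩ := hq i₀
        simp only [Finset.mem_insert, Finset.mem_singleton] at hc' hd'
        push_neg at hc' hd'
        obtain ⟨n12, n1y1, n1y2, n2y1, n2y2, ny⟩ := card4_ne hcard
        exact ⟨⟨(q i₀).1, (q i₀).2.1, none, (q i₀).2.2.1, (q i₀).2.2.2⟩, fun _ =>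
          ⟨hx1, hx2, hy1, hy2, n12, ny, hc'.1.symm, hd'.1.symm, hc'.2.1.symm, hd'.2.1.symm,
           hc'.2.2.1.symm, hd'.2.2.1.symm, hc'.2.2.2.symm, hd'.2.2.2.symm, hT1, hT2⟩⟩
      · obtain ⟨q, hq, hdis⟩ := hc
        obtain ⟨i₀, hc', hd'⟩ := pick_avoid
          (fun j => {(q j).1, (q j).2.1, (q j).2.2.1, (q j).2.2.2.1, (q j).2.2.2.2})
          hdis c' d'
        obtain ⟨hx1, hx2, hzz, hy1, hy2, hcard, hT1, hT2, hT3⟩ := hq i₀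
        simp only [Finset.mem_insert, Finset.mem_singleton] at hc' hd'
        push_neg at hc' hd'
        obtain ⟨n12, n1z, n1y1, n1y2, n2z, n2y1, n2y2, nzy1, nzy2, ny⟩ := card5_ne hcard
        have hz1 : ((q i₀).2.2.1 : VG × Fin t').1 = z := hfst z hzV _ hzz
        refine ⟨⟨(q i₀).1, (q i₀).2.1, some (q i₀).2.2.1, (q i₀).2.2.2.1, (q i₀).2.2.2.2⟩,
          fun _ => ⟨hx1, hx2, hy1, hy2, n12, ny, hc'.1.symm, hd'.1.symm, hc'.2.1.symm,
            hd'.2.1.symm, hc'.2.2.2.1.symm, hd'.2.2.2.1.symm, hc'.2.2.2.2.symm,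
            hd'.2.2.2.2.symm, ?_, ?_, ?_, ?_, hc'.2.2.1.symm, hd'.2.2.1.symm,
            n1z.symm, n2z.symm, nzy1, nzy2, hT1, hT2, hT3⟩⟩
        · rw [hz1]; exact hwz
        · rw [hz1]; exact hzV
        · rw [hz1]; exact hzx
        · rw [hz1]; exact hzz
    · exact ⟨⟨dflt, dflt, none, dflt, dflt⟩, fun h' => absurd h' h⟩
  -- the chain of segments
  obtain ⟨P, hP0, hPS⟩ : ∃ P : ℕ → SegData (VG × Fin t'),
      (0 + 1 < n → SegOK B χ V H' x w n 0 dflt dflt (P 0)) ∧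
      (∀ i, (i + 1) + 1 < n → SegOK B χ V H' x w n (i + 1) (P i).c (P i).d (P (i + 1))) := by
    refine ⟨fun i => Nat.rec (motive := fun _ => SegData (VG × Fin t'))
      (exNext 0 dflt dflt).choose
      (fun j prev => (exNext (j + 1) prev.c prev.d).choose) i, ?_, ?_⟩
    · exact (exNext 0 dflt dflt).choose_spec
    · exact fun i => (exNext (i + 1) _ _).choose_spec
  have hSOK : ∀ i, i + 1 < n → ∃ c' d', SegOK B χ V H' x w n i c' d' (P i) := by
    intro i h
    cases i with
    | zero => exact ⟨dflt, dflt, hP0 h⟩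
    | succ j => exact ⟨_, _, hPS j h⟩
  -- basic facts about each segment
  have hfacts : ∀ i, i + 1 < n →
      (P i).a ∈ H' (x i) ∧ (P i).b ∈ H' (x i) ∧
      (P i).c ∈ H' (x (i + 1)) ∧ (P i).d ∈ H' (x (i + 1)) ∧
      (P i).a ≠ (P i).b ∧ (P i).c ≠ (P i).d := by
    intro i h
    obtain ⟨c', d', hs⟩ := hSOK i h
    unfold SegOK at hs
    exact ⟨hs.1, hs.2.1, hs.2.2.1, hs.2.2.2.1, hs.2.2.2.2.1, hs.2.2.2.2.2.1⟩
  have hzfacts : ∀ i, i + 1 < n → ∀ z, (P i).zo = some z →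
      w i = some z.1 ∧ z.1 ∈ V ∧ (∀ j < n, z.1 ≠ x j) ∧ z ∈ H' z.1 ∧
      z ≠ (P i).a ∧ z ≠ (P i).b ∧ z ≠ (P i).c ∧ z ≠ (P i).d ∧
      BlueTriple B χ (P i).a (P i).b z ∧ BlueTriple B χ (P i).a z (P i).c ∧
      BlueTriple B χ z (P i).c (P i).d := by
    intro i h z hz
    obtain ⟨c', d', hs⟩ := hSOK i h
    unfold SegOK at hs
    rw [hz] at hs
    obtain ⟨-, -, -, -, -, -, -, -, -, -, -, -, -, -,
      h1, h2, h3, h4, -, -, h7, h8, h9, h10, h11, h12, h13⟩ := hs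
    exact ⟨h1, h2, h3, h4, h7, h8, h9, h10, h11, h12, h13⟩
  have hnfacts : ∀ i, i + 1 < n → (P i).zo = none →
      BlueTriple B χ (P i).a (P i).b (P i).c ∧
      BlueTriple B χ (P i).c (P i).d (P i).a := by
    intro i h hz
    obtain ⟨c', d', hs⟩ := hSOK i h
    unfold SegOK at hs
    rw [hz] at hs
    exact hs.2.2.2.2.2.2.2.2.2.2.2.2.2.2
  have havoid : ∀ i, i + 2 < n →
      (P (i + 1)).a ≠ (P i).c ∧ (P (i + 1)).a ≠ (P i).d ∧
      (P (i + 1)).b ≠ (P i).c ∧ (P (i + 1)).b ≠ (P i).d := by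
    intro i h
    have hs := hPS i h
    unfold SegOK at hs
    exact ⟨hs.2.2.2.2.2.2.1, hs.2.2.2.2.2.2.2.1, hs.2.2.2.2.2.2.2.2.1,
      hs.2.2.2.2.2.2.2.2.2.1⟩
  have hzavoid : ∀ i, i + 2 < n → ∀ z, (P (i + 1)).zo = some z →
      z ≠ (P i).c ∧ z ≠ (P i).d := by
    intro i h z hz
    have hs := hPS i h
    unfold SegOK at hs
    rw [hz] at hs
    exact ⟨hs.2.2.2.2.2.2.2.2.2.2.2.2.2.2.2.2.2.2.1,
      hs.2.2.2.2.2.2.2.2.2.2.2.2.2.2.2.2.2.2.2.1⟩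
  -- extra vertices for the none-segments
  have exE : ∀ i, i + 1 < n → ∃ eV : VG × Fin t', eV ∈ H' (x (i + 1)) ∧
      eV ≠ (P i).c ∧ eV ≠ (P i).d ∧ eV ≠ (P (i + 1)).a ∧ eV ≠ (P (i + 1)).b := by
    intro i h
    have hv : x (i + 1) ∈ V := hxV _ h
    have hcard : (H' (x (i + 1))).card = t := (hH' _ hv).1
    have hns : ¬ (H' (x (i + 1)) ⊆ {(P i).c, (P i).d, (P (i + 1)).a, (P (i + 1)).b}) := by
      intro hsub
      have h1 := Finset.card_le_card hsub
      have h2 := card4_le (P i).c (P i).d (P (i + 1)).a (P (i + 1)).b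
      omega
    obtain ⟨eV, heV, heV2⟩ := Finset.not_subset.mp hns
    simp only [Finset.mem_insert, Finset.mem_singleton] at heV2
    push_neg at heV2
    exact ⟨eV, heV, heV2.1, heV2.2.1, heV2.2.2.1, heV2.2.2.2⟩
  obtain ⟨E, hE⟩ : ∃ E : ℕ → VG × Fin t', ∀ i, i + 1 < n →
      E i ∈ H' (x (i + 1)) ∧ E i ≠ (P i).c ∧ E i ≠ (P i).d ∧
      E i ≠ (P (i + 1)).a ∧ E i ≠ (P (i + 1)).b := by
    refine ⟨fun i => if h : i + 1 < n then (exE i h).choose else dflt, fun i h => ?_⟩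
    simp only [dif_pos h]
    exact (exE i h).choose_spec
  -- the segment function
  obtain ⟨seg, hseg⟩ : ∃ seg : ℕ → ℕ → VG × Fin t', ∀ i,
      seg i 0 = (P i).b ∧ seg i 1 = (P i).a ∧
      (∀ z, (P i).zo = some z →
        seg i 2 = z ∧ seg i 3 = (P i).c ∧ seg i 4 = (P i).d) ∧
      ((P i).zo = none →
        seg i 2 = (P i).c ∧ seg i 3 = (P i).d ∧ seg i 4 = E i) := by
    refine ⟨fun i r =>
      if r = 0 then (P i).b else if r = 1 then (P i).a else
      (P i).zo.elim
        (if r = 2 then (P i).c else if r = 3 then (P i).d else E i)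
        (fun z => if r = 2 then z else if r = 3 then (P i).c else (P i).d),
      fun i => ⟨rfl, rfl, fun z hz => ?_, fun hz => ?_⟩⟩
    · simp [hz]
    · simp [hz]
  -- cluster/coordinate classification of slots
  have hcoord : ∀ i, i + 1 < n → ∀ r, r < 5 →
      (r < 2 ∧ seg i r ∈ H' (x i)) ∨
      (2 ≤ r ∧ seg i r ∈ H' (x (i + 1))) ∨
      (r = 2 ∧ w i = some (seg i r).1 ∧ (∀ j < n, (seg i r).1 ≠ x j)) := by
    intro i h r hr
    obtain ⟨hs0, hs1, hsS, hsN⟩ := hseg i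
    obtain ⟨haM, hbM, hcM, hdM, hab, hcd⟩ := hfacts i h
    rcases hzo : (P i).zo with _ | z
    · obtain ⟨e2, e3, e4⟩ := hsN hzo
      interval_cases r
      · exact Or.inl ⟨by omega, by rw [hs0]; exact hbM⟩
      · exact Or.inl ⟨by omega, by rw [hs1]; exact haM⟩
      · exact Or.inr (Or.inl ⟨by omega, by rw [e2]; exact hcM⟩)
      · exact Or.inr (Or.inl ⟨by omega, by rw [e3]; exact hdM⟩)
      · exact Or.inr (Or.inl ⟨by omega, by rw [e4]; exact (hE i h).1⟩)
    · obtain ⟨e2, e3, e4⟩ := hsS z hzo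
      obtain ⟨hwz, hzV, hzx, hzM, -⟩ := hzfacts i h z hzo
      interval_cases r
      · exact Or.inl ⟨by omega, by rw [hs0]; exact hbM⟩
      · exact Or.inl ⟨by omega, by rw [hs1]; exact haM⟩
      · exact Or.inr (Or.inr ⟨rfl, by rw [e2]; exact hwz, by rw [e2]; exact hzx⟩)
      · exact Or.inr (Or.inl ⟨by omega, by rw [e3]; exact hcM⟩)
      · exact Or.inr (Or.inl ⟨by omega, by rw [e4]; exact hdM⟩)
  -- vertices in consecutive clusters differ
  have hPQ : ∀ i, i + 1 < n → ∀ p q : VG × Fin t',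
      p ∈ H' (x i) → q ∈ H' (x (i + 1)) → p ≠ q := by
    intro i h p q hp hq hpq
    have h1 : p.1 = x i := hfst _ (hxV i (by omega)) _ hp
    have h2 : q.1 = x (i + 1) := hfst _ (hxV _ h) _ hq
    exact hxne i (i + 1) (by omega) h (by omega) (by rw [← h1, hpq, h2])
  -- within-segment distinctness
  have hnd : ∀ i, i + 1 < n → ∀ r r', r < r' → r' < 5 → seg i r ≠ seg i r' := by
    intro i h r r' hlt hr'
    obtain ⟨hs0, hs1, hsS, hsN⟩ := hseg i
    obtain ⟨haM, hbM, hcM, hdM, hab, hcd⟩ := hfacts i h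
    have hPQ' := hPQ i h
    rcases hzo : (P i).zo with _ | z
    · obtain ⟨e2, e3, e4⟩ := hsN hzo
      obtain ⟨hEM, hEc, hEd, hEa, hEb⟩ := hE i h
      interval_cases r' <;> interval_cases r <;>
        simp only [hs0, hs1, e2, e3, e4] <;>
        first
          | exact hab.symm
          | exact hcd
          | exact hEc.symm
          | exact hEd.symm
          | (apply hPQ' <;> assumption)
    · obtain ⟨e2, e3, e4⟩ := hsS z hzo
      obtain ⟨hwz, hzV, hzx, hzM, hza, hzb, hzc, hzd, -⟩ := hzfacts i h z hzo
      interval_cases r' <;> interval_cases r <;>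
        simp only [hs0, hs1, e2, e3, e4] <;>
        first
          | exact hab.symm
          | exact hcd
          | exact hzb.symm
          | exact hza.symm
          | exact hzc
          | exact hzd
          | (apply hPQ' <;> assumption)
  -- consecutive-segment distinctness
  have hconsec : ∀ i, i + 2 < n → ∀ r r', r < 5 → r' < 5 → seg i r ≠ seg (i + 1) r' := by
    intro i h2 r r' hr hr' heq
    have h1 : i + 1 < n := by omega
    have h1' : i + 1 + 1 < n := h2
    rcases hcoord i h1 r hr with ⟨hrlt, hm⟩ | ⟨hrge, hm⟩ | ⟨hre, hwm, hnx⟩ <;>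
      rcases hcoord (i + 1) h1' r' hr' with ⟨hrlt', hm'⟩ | ⟨hrge', hm'⟩ | ⟨hre', hwm', hnx'⟩
    · exact hPQ i h1 _ _ hm hm' heq
    · have c1 := hfst _ (hxV i (by omega)) _ hm
      have c2 := hfst _ (hxV (i + 2) (by omega)) _ hm'
      exact hxne i (i + 2) (by omega) (by omega) (by omega) (by rw [← c1, heq, c2])
    · have c1 := hfst _ (hxV i (by omega)) _ hm
      exact hnx' i (by omega) (by rw [← heq, c1])
    · -- the same-cluster case: {c,d,E} of segment i versus {b,a} of segment i+1
      obtain ⟨hs0', hs1', -, -⟩ := hseg (i + 1)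
      obtain ⟨hac, had, hbc, hbd⟩ := havoid i h2
      obtain ⟨hEM, hEc, hEd, hEa, hEb⟩ := hE i h1
      obtain ⟨hs0, hs1, hsS, hsN⟩ := hseg i
      rcases hzo : (P i).zo with _ | z
      · obtain ⟨e2, e3, e4⟩ := hsN hzo
        interval_cases r <;> interval_cases r' <;>
          simp only [hs0', hs1', e2, e3, e4] at heq <;>
          first
            | exact hbc heq.symm
            | exact hac heq.symm
            | exact hbd heq.symm
            | exact had heq.symm
            | exact hEb heq
            | exact hEa heq
            | omega
      · obtain ⟨e2, e3, e4⟩ := hsS z hzo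
        obtain ⟨hwz, hzV, hzx, hzM, -⟩ := hzfacts i h1 z hzo
        interval_cases r <;> interval_cases r' <;>
          simp only [hs0', hs1', e2, e3, e4] at heq <;>
          first
            | exact hbc heq.symm
            | exact hac heq.symm
            | exact hbd heq.symm
            | exact had heq.symm
            | (exact hzx (i + 1) (by omega)
                (by rw [heq, ← hs0']; exact hfst (x (i + 1)) (hxV (i + 1) (by omega)) _ hm'))
            | (exact hzx (i + 1) (by omega)
                (by rw [heq, ← hs1']; exact hfst (x (i + 1)) (hxV (i + 1) (by omega)) _ hm'))
            | omega
    · have c1 := hfst _ (hxV (i + 1) (by omega)) _ hm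
      have c2 := hfst _ (hxV (i + 2) (by omega)) _ hm'
      exact hxne (i + 1) (i + 2) (by omega) (by omega) (by omega) (by rw [← c1, heq, c2])
    · have c1 := hfst _ (hxV (i + 1) (by omega)) _ hm
      exact hnx' (i + 1) (by omega) (by rw [← heq, c1])
    · have c2 := hfst _ (hxV (i + 1) (by omega)) _ hm'
      exact hnx (i + 1) (by omega) (by rw [heq, c2])
    · have c2 := hfst _ (hxV (i + 2) (by omega)) _ hm'
      exact hnx (i + 2) (by omega) (by rw [heq, c2])
    · refine absurd (hw i (i + 1) h1 h1' ?_ ?_) (by omega)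
      · rw [hwm]; simp
      · rw [hwm, hwm', heq]
  -- far-apart segments
  have hfar : ∀ i i', i + 2 ≤ i' → i' + 1 < n → ∀ r r', r < 5 → r' < 5 →
      seg i r ≠ seg i' r' := by
    intro i i' hii h' r r' hr hr' heq
    have h : i + 1 < n := by omega
    rcases hcoord i h r hr with ⟨-, hm⟩ | ⟨-, hm⟩ | ⟨-, hwm, hnx⟩ <;>
      rcases hcoord i' h' r' hr' with ⟨-, hm'⟩ | ⟨-, hm'⟩ | ⟨-, hwm', hnx'⟩
    · have c1 := hfst _ (hxV i (by omega)) _ hm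
      have c2 := hfst _ (hxV i' (by omega)) _ hm'
      exact hxne i i' (by omega) (by omega) (by omega) (by rw [← c1, heq, c2])
    · have c1 := hfst _ (hxV i (by omega)) _ hm
      have c2 := hfst _ (hxV (i' + 1) (by omega)) _ hm'
      exact hxne i (i' + 1) (by omega) (by omega) (by omega) (by rw [← c1, heq, c2])
    · have c1 := hfst _ (hxV i (by omega)) _ hm
      exact hnx' i (by omega) (by rw [← heq, c1])
    · have c1 := hfst _ (hxV (i + 1) (by omega)) _ hm
      have c2 := hfst _ (hxV i' (by omega)) _ hm'
      exact hxne (i + 1) i' (by omega) (by omega) (by omega) (by rw [← c1, heq, c2])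
    · have c1 := hfst _ (hxV (i + 1) (by omega)) _ hm
      have c2 := hfst _ (hxV (i' + 1) (by omega)) _ hm'
      exact hxne (i + 1) (i' + 1) (by omega) (by omega) (by omega) (by rw [← c1, heq, c2])
    · have c1 := hfst _ (hxV (i + 1) (by omega)) _ hm
      exact hnx' (i + 1) (by omega) (by rw [← heq, c1])
    · have c2 := hfst _ (hxV i' (by omega)) _ hm'
      exact hnx i' (by omega) (by rw [heq, c2])
    · have c2 := hfst _ (hxV (i' + 1) (by omega)) _ hm'
      exact hnx (i' + 1) (by omega) (by rw [heq, c2])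
    · refine absurd (hw i i' h h' ?_ ?_) (by omega)
      · rw [hwm]; simp
      · rw [hwm, hwm', heq]
  -- the master distinctness lemma
  have hKey : ∀ m m', m < n → m' < n → m < m' →
      seg (m / 5) (m % 5) ≠ seg (m' / 5) (m' % 5) := by
    intro m m' hm hm' hlt
    have h1 : m / 5 + 1 < n := by omega
    have h2 : m' / 5 + 1 < n := by omega
    have hr : m % 5 < 5 := Nat.mod_lt _ (by norm_num)
    have hr' : m' % 5 < 5 := Nat.mod_lt _ (by norm_num)
    by_cases he : m / 5 = m' / 5
    · have hrr : m % 5 < m' % 5 := by omega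
      rw [he]
      exact hnd (m' / 5) h2 _ _ hrr hr'
    · by_cases he2 : m' / 5 = m / 5 + 1
      · rw [he2]
        exact hconsec (m / 5) (by omega) _ _ hr hr'
      · have : m / 5 + 2 ≤ m' / 5 := by
          have : m / 5 ≤ m' / 5 := Nat.div_le_div_right hlt.le
          omega
        exact hfar (m / 5) (m' / 5) this h2 _ _ hr hr'
  refine ⟨fun m => seg (m / 5) (m % 5), ?_, ?_⟩
  · intro m hm m' hm' heq
    simp only [Set.mem_Iio] at hm hm'
    by_contra hne
    rcases Nat.lt_or_ge m m' with h | h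
    · exact hKey m m' hm hm' h heq
    · exact hKey m' m hm' hm (by omega) heq.symm
  · intro m hm2
    dsimp only
    have hi1 : m / 5 + 1 < n := by omega
    obtain ⟨hs0, hs1, hsS, hsN⟩ := hseg (m / 5)
    obtain ⟨haM, hbM, hcM, hdM, hab, hcd⟩ := hfacts (m / 5) hi1
    have h5 : m % 5 = 0 ∨ m % 5 = 1 ∨ m % 5 = 2 ∨ m % 5 = 3 ∨ m % 5 = 4 := by omega
    rcases h5 with h0 | h0 | h0 | h0 | h0
    · have e0 : (m + 1) / 5 = m / 5 := by omega
      have e1 : (m + 1) % 5 = 1 := by omega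
      have e2 : (m + 2) / 5 = m / 5 := by omega
      have e3 : (m + 2) % 5 = 2 := by omega
      rw [h0, e0, e1, e2, e3]
      rcases hzo : (P (m / 5)).zo with _ | z
      · obtain ⟨f2, f3, f4⟩ := hsN hzo
        rw [hs0, hs1, f2]
        exact blueTriple_swap (hnfacts (m / 5) hi1 hzo).1
      · obtain ⟨f2, f3, f4⟩ := hsS z hzo
        rw [hs0, hs1, f2]
        exact blueTriple_swap (hzfacts (m / 5) hi1 z hzo).2.2.2.2.2.2.2.2.1
    · have e0 : (m + 1) / 5 = m / 5 := by omega
      have e1 : (m + 1) % 5 = 2 := by omega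
      have e2 : (m + 2) / 5 = m / 5 := by omega
      have e3 : (m + 2) % 5 = 3 := by omega
      rw [h0, e0, e1, e2, e3]
      rcases hzo : (P (m / 5)).zo with _ | z
      · obtain ⟨f2, f3, f4⟩ := hsN hzo
        rw [hs1, f2, f3]
        exact blueTriple_rot (hnfacts (m / 5) hi1 hzo).2
      · obtain ⟨f2, f3, f4⟩ := hsS z hzo
        rw [hs1, f2, f3]
        exact (hzfacts (m / 5) hi1 z hzo).2.2.2.2.2.2.2.2.2.1
    · have e0 : (m + 1) / 5 = m / 5 := by omega
      have e1 : (m + 1) % 5 = 3 := by omega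
      have e2 : (m + 2) / 5 = m / 5 := by omega
      have e3 : (m + 2) % 5 = 4 := by omega
      rw [h0, e0, e1, e2, e3]
      rcases hzo : (P (m / 5)).zo with _ | z
      · obtain ⟨f2, f3, f4⟩ := hsN hzo
        rw [f2, f3, f4]
        obtain ⟨hEM, hEc, hEd, hEa, hEb⟩ := hE (m / 5) hi1
        exact hClus (x (m / 5 + 1)) (hxV _ hi1) _ _ _ hcM hdM hEM hcd hEc.symm hEd.symm
      · obtain ⟨f2, f3, f4⟩ := hsS z hzo
        rw [f2, f3, f4]
        exact (hzfacts (m / 5) hi1 z hzo).2.2.2.2.2.2.2.2.2.2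
    · have hi2 : m / 5 + 2 < n := by omega
      have e0 : (m + 1) / 5 = m / 5 := by omega
      have e1 : (m + 1) % 5 = 4 := by omega
      have e2 : (m + 2) / 5 = m / 5 + 1 := by omega
      have e3 : (m + 2) % 5 = 0 := by omega
      rw [h0, e0, e1, e2, e3]
      obtain ⟨hs0', hs1', -, -⟩ := hseg (m / 5 + 1)
      obtain ⟨hac, had, hbc, hbd⟩ := havoid (m / 5) hi2
      obtain ⟨haM', hbM', -, -, -, -⟩ := hfacts (m / 5 + 1) hi2
      rcases hzo : (P (m / 5)).zo with _ | z
      · obtain ⟨f2, f3, f4⟩ := hsN hzo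
        rw [f3, f4, hs0']
        obtain ⟨hEM, hEc, hEd, hEa, hEb⟩ := hE (m / 5) hi1
        exact hClus (x (m / 5 + 1)) (hxV _ hi1) _ _ _ hdM hEM hbM'
          hEd.symm (fun hh => hbd hh.symm) hEb
      · obtain ⟨f2, f3, f4⟩ := hsS z hzo
        rw [f3, f4, hs0']
        exact hClus (x (m / 5 + 1)) (hxV _ hi1) _ _ _ hcM hdM hbM'
          hcd (fun hh => hbc hh.symm) (fun hh => hbd hh.symm)
    · have hi2 : m / 5 + 2 < n := by omega
      have e0 : (m + 1) / 5 = m / 5 + 1 := by omega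
      have e1 : (m + 1) % 5 = 0 := by omega
      have e2 : (m + 2) / 5 = m / 5 + 1 := by omega
      have e3 : (m + 2) % 5 = 1 := by omega
      rw [h0, e0, e1, e2, e3]
      obtain ⟨hs0', hs1', -, -⟩ := hseg (m / 5 + 1)
      obtain ⟨hac, had, hbc, hbd⟩ := havoid (m / 5) hi2
      obtain ⟨haM', hbM', -, -, hab', -⟩ := hfacts (m / 5 + 1) hi2
      rcases hzo : (P (m / 5)).zo with _ | z
      · obtain ⟨f2, f3, f4⟩ := hsN hzo
        rw [f4, hs0', hs1']
        obtain ⟨hEM, hEc, hEd, hEa, hEb⟩ := hE (m / 5) hi1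
        exact hClus (x (m / 5 + 1)) (hxV _ hi1) _ _ _ hEM hbM' haM'
          hEb hEa hab'.symm
      · obtain ⟨f2, f3, f4⟩ := hsS z hzo
        rw [f4, hs0', hs1']
        exact hClus (x (m / 5 + 1)) (hxV _ hi1) _ _ _ hdM hbM' haM'
          (fun hh => hbd hh.symm) (fun hh => had hh.symm) hab'.symm

/-- Let `ℓ = 17`, `k = 2ℓ`, `t = 8k + 40k² + 5` and let `t'` be a Ramsey number for
monochromatic `K_t⁽³⁾` in 2-coloured complete 3-uniform hypergraphs on `t'` vertices.
Let `H` be the hypergraph of triangles of the blow-up `G^k(t')`, coloured by `χ`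
(`true` = blue), let `V` be a set of vertices of `G` with chosen blue clusters
`H'(v) ⊆ {v} × Fin t'` of size `t` all of whose triples are blue, and let `F` be the
`(2,3)`-graph on `V` whose 2-edges (resp. 3-edges) record blue `(6,6)`-connectors
(resp. `(6,3,6)`-connectors) between clusters.  If `F` contains a `(2,3)`-path on `n`
vertices, then `H` contains a blue tight path on `n` vertices. -/
theorem blue_tight_path_from_23_path
    (ℓ k t t' : ℕ) (hℓ : ℓ = 17) (hk : k = 2 * ℓ) (ht : t = 8 * k + 40 * k ^ 2 + 5)
    (ht' : ∀ c : Finset (Fin t') → Bool, ∃ (S : Finset (Fin t')) (b : Bool),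
      S.card = t ∧ ∀ e ⊆ S, e.card = 3 → c e = b)
    (VG : Type) [DecidableEq VG] (G : SimpleGraph VG)
    (χ : Finset (VG × Fin t') → Bool)
    (V : Set VG) (H' : VG → Finset (VG × Fin t'))
    (hH' : ∀ v ∈ V, (H' v).card = t ∧ (∀ x ∈ H' v, x.1 = v) ∧
      ∀ a b c : VG × Fin t', a ∈ H' v → b ∈ H' v → c ∈ H' v →
        a ≠ b → a ≠ c → b ≠ c → χ {a, b, c} = true)
    (n : ℕ) (x : ℕ → VG)
    (hxV : ∀ i < n, x i ∈ V) (hxinj : Set.InjOn x (Set.Iio n))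
    (w : ℕ → Option VG)
    (hpath : ∀ i, i + 1 < n →
      (w i = none ∧
        Conn66 (blowupGraph (graphPow G k) t') χ (H' (x i)) (H' (x (i + 1)))) ∨
      (∃ z, w i = some z ∧ z ∈ V ∧ (∀ j < n, z ≠ x j) ∧
        Conn636 (blowupGraph (graphPow G k) t') χ (H' (x i)) (H' (x (i + 1))) (H' z)))
    (hw : ∀ i j, i + 1 < n → j + 1 < n → w i ≠ none → w i = w j → i = j) :
    ∃ f : ℕ → VG × Fin t', Set.InjOn f (Set.Iio n) ∧
      ∀ i, i + 2 < n →
        IsTriangle (blowupGraph (graphPow G k) t') (f i) (f (i + 1)) (f (i + 2)) ∧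
        χ {f i, f (i + 1), f (i + 2)} = true := by
  classical
  have ht5 : 5 ≤ t := by omega
  have ht'pos : 0 < t' := by
    obtain ⟨S, b, hS, -⟩ := ht' (fun _ => true)
    have h1 : S.card ≤ t' := by simpa using Finset.card_le_univ S
    omega
  by_cases hn : n < 2
  · refine ⟨fun _ => (x 0, ⟨0, ht'pos⟩), ?_, ?_⟩
    · intro a ha b hb _
      simp only [Set.mem_Iio] at ha hb
      omega
    · intro i hi; omega
  push_neg at hn
  refine aux_construction (blowupGraph (graphPow G k) t') χ V H' t ht5 ?_ hH' n x hxV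
    hxinj w hpath hw hn (x 0, ⟨0, ht'pos⟩)
  intro u v h1 h2
  exact Or.inl ⟨h1, h2⟩
end
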